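/- arXiv:2202.12489 — 5 statements merged into one kernel-verified Lean document; each statement's English description precedes it below -/
import Mathlib

section
/- Let n ≥ 2 and 1 ≤ k ≤ n−1. The family of vectors Ψ(e_{i_1}, e_{i_2}, …, e_{i_k}) ∈ T_n, indexed by strictly increasing tuples 1 ≤ i_1 < i_2 < ⋯ < i_k ≤ n−1, is a basis of the K-vector space H_k. -/
open scoped BigOperators

set_option maxHeartbeats 1000000
set_option synthInstance.maxHeartbeats 400000

noncomputable section

/-- The ground field `K = ℂ(q)`. -/
abbrev K : Type := RatFunc ℂ

/-- The variable `q` of `K = ℂ(q)`. -/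
def q : K := RatFunc.X

/-- `T n` models the `n`-th tensor power of the vector representation of
`U_q(gl(1|1))`, as functions on binary strings of length `n`. -/
abbrev T (n : ℕ) : Type := (Fin n → Fin 2) → K

/-- The standard basis vector `v_α` of `T n`. -/
def v (n : ℕ) (α : Fin n → Fin 2) : T n := fun β => if β = α then 1 else 0

/-- `v₀^{⊗ n}`, the basis vector of the all-zeroes string. -/
def v0 (n : ℕ) : T n := v n (fun _ => 0)

/-- `w n i` is the basis vector whose string has a single `1` in (1-indexed) position `i`. -/
def w (n i : ℕ) : T n := v n (fun j => if (j : ℕ) + 1 = i then 1 else 0)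

/-- `e i = -w_i + q⁻¹ w_{i+1}`. -/
def e (n i : ℕ) : T n := -(w n i) + q⁻¹ • w n (i + 1)

/-- The `R`-matrix on a pair of strands: entry `Rmat out inp`. -/
def Rmat : Fin 2 × Fin 2 → Fin 2 × Fin 2 → K := fun out inp =>
  if inp = (0, 0) then (if out = (0, 0) then q else 0)
  else if inp = (1, 0) then (if out = (0, 1) then 1 else 0)
  else if inp = (0, 1) then
    (if out = (1, 0) then 1 else if out = (0, 1) then q - q⁻¹ else 0)
  else (if out = (1, 1) then -q⁻¹ else 0)

/-- The `R`-matrix acting at positions `i`, `j` (0-indexed) of `T n`. -/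
def PhiAux (n : ℕ) (i j : Fin n) : T n →ₗ[K] T n where
  toFun f := fun β => ∑ p : Fin 2 × Fin 2,
    Rmat (β i, β j) p * f (Function.update (Function.update β i p.1) j p.2)
  map_add' f g := by
    funext β
    try dsimp only
    simp only [Pi.add_apply]
    rw [← Finset.sum_add_distrib]
    exact Finset.sum_congr rfl fun p _ => by simp [mul_add]
  map_smul' c f := by
    funext β
    try dsimp only
    simp only [Pi.smul_apply, smul_eq_mul, RingHom.id_apply]
    rw [Finset.mul_sum]
    exact Finset.sum_congr rfl fun p _ => by ring

/-- `Phi n t` is the map induced by the braid generator `σ_t` (with `1 ≤ t ≤ n-1`),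
acting through the `R`-matrix at (1-indexed) positions `(t, t+1)`. -/
def Phi (n t : ℕ) : T n →ₗ[K] T n :=
  if h : 0 < t ∧ t < n then PhiAux n ⟨t - 1, by omega⟩ ⟨t, h.2⟩ else 0

/-- The action of `E` on `T n`. -/
def En (n : ℕ) : T n →ₗ[K] T n where
  toFun f := fun β => ∑ i : Fin n,
    if β i = 0 then
      ((-1 : K) ^ (Finset.univ.filter (fun j : Fin n => j < i ∧ β j = 1)).card
        * q⁻¹ ^ (n - 1 - (i : ℕ))) * f (Function.update β i 1)
    else 0
  map_add' f g := by
    funext β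
    try dsimp only
    simp only [Pi.add_apply]
    rw [← Finset.sum_add_distrib]
    refine Finset.sum_congr rfl fun i _ => ?_
    by_cases h : β i = 0 <;> simp [h, mul_add]
  map_smul' c f := by
    funext β
    try dsimp only
    simp only [Pi.smul_apply, smul_eq_mul, RingHom.id_apply]
    rw [Finset.mul_sum]
    refine Finset.sum_congr rfl fun i _ => ?_
    by_cases h : β i = 0 <;> simp [h] <;> ring

/-- The action of `F` on `T n`. -/
def Fn (n : ℕ) : T n →ₗ[K] T n where
  toFun f := fun β => ∑ i : Fin n,
    if β i = 1 then
      ((-1 : K) ^ (Finset.univ.filter (fun j : Fin n => j < i ∧ β j = 1)).card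
        * q ^ (i : ℕ)) * f (Function.update β i 0)
    else 0
  map_add' f g := by
    funext β
    try dsimp only
    simp only [Pi.add_apply]
    rw [← Finset.sum_add_distrib]
    refine Finset.sum_congr rfl fun i _ => ?_
    by_cases h : β i = 1 <;> simp [h, mul_add]
  map_smul' c f := by
    funext β
    try dsimp only
    simp only [Pi.smul_apply, smul_eq_mul, RingHom.id_apply]
    rw [Finset.mul_sum]
    refine Finset.sum_congr rfl fun i _ => ?_
    by_cases h : β i = 1 <;> simp [h] <;> ring

/-- The number of `1`s in a binary string. -/
def wt {n : ℕ} (α : Fin n → Fin 2) : ℕ := (Finset.univ.filter (fun i => α i = 1)).card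

/-- `Tk n k` is the span of the basis vectors with exactly `k` entries equal to `1`. -/
def Tk (n k : ℕ) : Submodule K (T n) :=
  Submodule.span K {f : T n | ∃ α, wt α = k ∧ f = v n α}

/-- `Hk n k` is the space of highest weight vectors of weight `(n-k)ε₁ + kε₂`. -/
def Hk (n k : ℕ) : Submodule K (T n) := LinearMap.ker (En n) ⊓ Tk n k

/-- The bilinear product `m` on `T n`. -/
def mul2 (n : ℕ) (f g : T n) : T n := fun γ =>
  ∑ α : Fin n → Fin 2,
    if (∀ i, α i = 1 → γ i = 1) then
      ((-1 : K) ^ (∑ p ∈ Finset.univ.filter (fun p : Fin n × Fin n => p.1 < p.2),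
          (((fun i => if α i = 1 then 0 else γ i) p.1 : Fin 2) : ℕ) * ((α p.2 : Fin 2) : ℕ)))
        * f α * g (fun i => if α i = 1 then 0 else γ i)
    else 0

/-- The left-iterated product `Ψ(u_1, …, u_k) = m(…m(m(u_1,u_2),u_3)…,u_k)`. -/
def Psi (n : ℕ) : (k : ℕ) → (Fin k → T n) → T n
  | 0, _ => v0 n
  | 1, u => u 0
  | (k + 2), u => mul2 n (Psi n (k + 1) (fun i => u i.castSucc)) (u (Fin.last (k + 1)))

/-- Concatenation (tensor product) `T a ⊗ T b → T (a + b)`. -/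
def conc {a b : ℕ} (f : T a) (g : T b) : T (a + b) := fun γ =>
  f (fun i => γ (Fin.castAdd b i)) * g (fun i => γ (Fin.natAdd a i))

/-- Identification `T a ≃ T b` for `a = b`. -/
def castT {a b : ℕ} (h : a = b) (f : T a) : T b := fun γ => f (fun i => γ (Fin.cast h i))

/-- The block vector `Θ_b = Σ_{r=0}^{b-1} (-1)^r q^{-(b-1-r)} v_{β(r)}`. -/
def Theta (b : ℕ) : T b :=
  ∑ r : Fin b, ((-1 : K) ^ (r : ℕ) * q⁻¹ ^ (b - 1 - (r : ℕ))) •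
    v b (fun i => if i = r then 0 else 1)

/-- The map induced by the braid `λ = σ_{n-1} ⋯ σ_1`. -/
def Lam (n : ℕ) : T n →ₗ[K] T n :=
  ((List.range (n - 1)).map (fun t => Phi n (t + 1))).foldl (fun acc g => g ∘ₗ acc) LinearMap.id

/-- The Vandermonde-type matrix `B(n)`. -/
def B (n : ℕ) : Matrix (Fin n) (Fin n) K :=
  fun i j => q ^ ((i : ℤ) * (n : ℤ) * ((n : ℤ) - 1 - 2 * (j : ℤ)))

/-- `C(n) = B(n)⁻¹`. -/
def Cmat (n : ℕ) : Matrix (Fin n) (Fin n) K := (B n)⁻¹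

/-- A combinatorial string `(a_1, b_1, a_2, b_2, …, b_l, a_{l+1})`. -/
structure GString where
  l : ℕ
  a : Fin (l + 1) → ℕ
  b : Fin l → ℕ

/-- Membership of a string in `S_k` (for strands number `n`). -/
def memSk (n k : ℕ) (s : GString) : Prop :=
  (∀ i, 2 ≤ s.b i) ∧ (∑ i, (s.b i - 1)) = k ∧ ((∑ i, s.a i) + ∑ i, s.b i) = n

/-- The length of the string, computed blockwise. -/
def lenOf : (l : ℕ) → (Fin (l + 1) → ℕ) → (Fin l → ℕ) → ℕ
  | 0, a, _ => a 0
  | (l + 1), a, b => (a 0 + b 0) + lenOf l (fun i => a i.succ) (fun i => b i.succ)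

/-- The concatenation `v₀^{⊗a_1} ⊗ Θ_{b_1} ⊗ ⋯ ⊗ Θ_{b_l} ⊗ v₀^{⊗a_{l+1}}`. -/
def rawphi : (l : ℕ) → (a : Fin (l + 1) → ℕ) → (b : Fin l → ℕ) → T (lenOf l a b)
  | 0, a, _ => v0 (a 0)
  | (l + 1), a, b =>
      conc (conc (v0 (a 0)) (Theta (b 0)))
        (rawphi l (fun i => a i.succ) (fun i => b i.succ))

/-- `φ(s) ∈ T n`, the vector associated to a string `s`. -/
def phi (n : ℕ) (s : GString) : T n :=
  if h : lenOf s.l s.a s.b = n then castT h (rawphi s.l s.a s.b) else 0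



namespace Aux

variable {n : ℕ}

lemma fin2_cases (x : Fin 2) : x = 0 ∨ x = 1 := by fin_cases x <;> simp

lemma fin2_ne0 {x : Fin 2} (h : ¬ x = 1) : x = 0 := by
  rcases fin2_cases x with h0 | h1
  · exact h0
  · exact absurd h1 h

/-- number of 1s of `γ` strictly before `i` -/
def cnt (γ : Fin n → Fin 2) (i : Fin n) : ℕ :=
  (Finset.univ.filter (fun j : Fin n => j < i ∧ γ j = 1)).card

def E2 (α β : Fin n → Fin 2) : ℕ :=
  ∑ p ∈ Finset.univ.filter (fun p : Fin n × Fin n => p.1 < p.2), ((β p.1 : ℕ) * (α p.2 : ℕ))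

def un (α β : Fin n → Fin 2) : Fin n → Fin 2 := fun i => if α i = 1 then 1 else β i

def Dis (α β : Fin n → Fin 2) : Prop := ∀ i, α i = 1 → β i = 0

def suppF (γ : Fin n → Fin 2) : Finset (Fin n) := Finset.univ.filter (fun i => γ i = 1)

def M (γ : Fin n → Fin 2) : ℕ := ∑ i ∈ suppF γ, (i : ℕ)

def sing (p : Fin n) : Fin n → Fin 2 := fun j => if j = p then 1 else 0

def coefE (α : Fin n → Fin 2) (i : Fin n) : K := (-1:K)^(cnt α i) * q⁻¹ ^ (n - 1 - (i:ℕ))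

lemma val_eq_ite (x : Fin 2) : (x : ℕ) = if x = 1 then 1 else 0 := by
  rcases fin2_cases x with h | h <;> subst h <;> simp

lemma wt_eq_sum (γ : Fin n → Fin 2) : wt γ = ∑ j : Fin n, (γ j : ℕ) := by
  rw [wt, Finset.card_filter]
  exact Finset.sum_congr rfl fun j _ => (val_eq_ite (γ j)).symm

lemma cnt_eq_sum (γ : Fin n → Fin 2) (i : Fin n) :
    cnt γ i = ∑ j ∈ Finset.univ.filter (fun j : Fin n => j < i), (γ j : ℕ) := by
  rw [cnt, Finset.card_filter, Finset.sum_filter]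
  refine Finset.sum_congr rfl fun j _ => ?_
  rcases fin2_cases (γ j) with h | h <;> by_cases hj : j < i <;> simp [h, hj]

lemma wt_sing (p : Fin n) : wt (sing p) = 1 := by
  rw [wt]
  convert Finset.card_singleton p using 2
  ext j
  simp only [Finset.mem_filter, Finset.mem_univ, true_and, Finset.mem_singleton, sing]
  constructor
  · intro h; by_contra hj; simp [hj] at h
  · intro h; simp [h]

lemma M_sing (p : Fin n) : M (sing p) = (p : ℕ) := by
  rw [M]
  have : suppF (sing p) = {p} := by
    ext j
    simp only [suppF, Finset.mem_filter, Finset.mem_univ, true_and, Finset.mem_singleton, sing]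
    constructor
    · intro h; by_contra hj; simp [hj] at h
    · intro h; simp [h]
  rw [this, Finset.sum_singleton]

lemma suppF_un (α β : Fin n → Fin 2) (h : Dis α β) :
    suppF (un α β) = suppF α ∪ suppF β := by
  ext j
  simp only [suppF, Finset.mem_filter, Finset.mem_univ, true_and, Finset.mem_union, un]
  rcases fin2_cases (α j) with h0 | h1
  · simp [h0]
  · simp [h1]

lemma disj_supp (α β : Fin n → Fin 2) (h : Dis α β) : Disjoint (suppF α) (suppF β) := by
  rw [Finset.disjoint_left]
  intro j hj hj'
  simp only [suppF, Finset.mem_filter, Finset.mem_univ, true_and] at hj hj'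
  rw [h j hj] at hj'
  exact absurd hj' (by decide)

lemma wt_un (α β : Fin n → Fin 2) (h : Dis α β) : wt (un α β) = wt α + wt β := by
  have : wt = fun γ : Fin n → Fin 2 => (suppF γ).card := by
    funext γ; rfl
  rw [this]
  simp only [suppF_un α β h]
  rw [Finset.card_union_of_disjoint (disj_supp α β h)]

lemma M_un (α β : Fin n → Fin 2) (h : Dis α β) : M (un α β) = M α + M β := by
  rw [M, M, M, suppF_un α β h, Finset.sum_union (disj_supp α β h)]


/-- parity operator -/
def Jm (n : ℕ) : T n →ₗ[K] T n where
  toFun f := fun γ => (-1:K)^(wt γ) * f γ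
  map_add' f g := by funext γ; simp [mul_add]
  map_smul' c f := by funext γ; simp; ring

lemma Jm_v (α : Fin n → Fin 2) : Jm n (v n α) = ((-1:K)^(wt α)) • v n α := by
  funext γ
  simp only [Jm, LinearMap.coe_mk, AddHom.coe_mk, Pi.smul_apply, smul_eq_mul, v]
  by_cases h : γ = α
  · subst h; simp
  · simp [h]

lemma eq_sum_v (f : T n) : f = ∑ γ : Fin n → Fin 2, f γ • v n γ := by
  funext β
  rw [Finset.sum_apply]
  simp only [Pi.smul_apply, smul_eq_mul, v]
  rw [Finset.sum_eq_single β]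
  · simp
  · intro γ _ hγ; simp [Ne.symm hγ]
  · intro h; exact absurd (Finset.mem_univ β) h

/-- `mul2` as a bilinear map -/
def M2 (n : ℕ) : T n →ₗ[K] T n →ₗ[K] T n :=
  LinearMap.mk₂ K (mul2 n)
    (fun f₁ f₂ g => by
      funext γ
      simp only [mul2, Pi.add_apply]
      rw [← Finset.sum_add_distrib]
      refine Finset.sum_congr rfl fun α _ => ?_
      split_ifs <;> ring)
    (fun c f g => by
      funext γ
      simp only [mul2, Pi.smul_apply, smul_eq_mul]
      rw [Finset.mul_sum]
      refine Finset.sum_congr rfl fun α _ => ?_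
      split_ifs <;> ring)
    (fun f g₁ g₂ => by
      funext γ
      simp only [mul2, Pi.add_apply]
      rw [← Finset.sum_add_distrib]
      refine Finset.sum_congr rfl fun α _ => ?_
      split_ifs <;> ring)
    (fun c f g => by
      funext γ
      simp only [mul2, Pi.smul_apply, smul_eq_mul]
      rw [Finset.mul_sum]
      refine Finset.sum_congr rfl fun α _ => ?_
      split_ifs <;> ring)

lemma mul2_eq_M2 (f g : T n) : mul2 n f g = M2 n f g := rfl

lemma mul2_zero_left (g : T n) : mul2 n 0 g = 0 := by
  rw [mul2_eq_M2]; simp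

lemma mul2_zero_right (f : T n) : mul2 n f 0 = 0 := by
  rw [mul2_eq_M2]; simp

/-- `En` on a basis vector. -/
lemma En_v (α : Fin n → Fin 2) :
    En n (v n α) = ∑ i ∈ suppF α, coefE α i • v n (Function.update α i 0) := by
  funext β
  simp only [En, LinearMap.coe_mk, AddHom.coe_mk]
  rw [Finset.sum_apply, suppF, Finset.sum_filter]
  refine Finset.sum_congr rfl fun i _ => ?_
  simp only [Pi.smul_apply, smul_eq_mul, v, coefE]
  by_cases hβ : β i = 0
  · by_cases hα : α i = 1
    · -- both sides: indicator of β = update α i 0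
      have key : (Function.update β i 1 = α) ↔ (β = Function.update α i 0) := by
        constructor
        · intro h
          funext j
          by_cases hj : j = i
          · subst hj; simp [hβ]
          · rw [Function.update_of_ne hj, ← h, Function.update_of_ne hj]
        · intro h
          funext j
          by_cases hj : j = i
          · subst hj; simp [hα]
          · rw [Function.update_of_ne hj, h, Function.update_of_ne hj]
      by_cases h : β = Function.update α i 0
      · have h1 : Function.update β i 1 = α := key.mpr h
        have hcnt : (Finset.univ.filter (fun j : Fin n => j < i ∧ β j = 1)).card = cnt α i := by
          rw [cnt]
          congr 1
          apply Finset.filter_congr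
          intro j _
          by_cases hj : j < i
          · have hji : j ≠ i := ne_of_lt hj
            simp [hj, h, Function.update_of_ne hji]
          · simp [hj]
        rw [if_pos hβ, if_pos hα, if_pos h1, if_pos h, hcnt]
      · have h1 : ¬ (Function.update β i 1 = α) := fun hc => h (key.mp hc)
        simp [hβ, h, h1, hα]
    · -- α i ≠ 1, i.e. α i = 0 : LHS indicator impossible, RHS indicator impossible
      have hα0 : α i = 0 := fin2_ne0 hα
      have h1 : ¬ (Function.update β i 1 = α) := by
        intro hc
        have := congrFun hc i
        simp [hα0] at this
      simp [hβ, hα, h1]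
  · -- β i ≠ 0, so β i = 1 : RHS indicator β = update α i 0 impossible
    have h2 : ¬ (β = Function.update α i 0) := by
      intro hc
      have := congrFun hc i
      simp at this
      exact hβ this
    by_cases hα : α i = 1 <;> simp [hβ, hα, h2]


lemma neg1pow (a b : ℕ) (h : a % 2 = b % 2) : ((-1:K))^a = (-1)^b := by
  rw [← Nat.div_add_mod a 2, ← Nat.div_add_mod b 2, pow_add, pow_add, pow_mul, pow_mul,
    neg_one_sq, one_pow, one_pow, h]

lemma fin2_ne0' {x : Fin 2} (h : ¬ x = 0) : x = 1 := by
  rcases fin2_cases x with h0 | h1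
  · exact absurd h0 h
  · exact h1

lemma E2_eq (α β : Fin n → Fin 2) : E2 α β = ∑ j : Fin n, (α j : ℕ) * cnt β j := by
  rw [E2, Finset.sum_filter, ← Finset.univ_product_univ, Finset.sum_product]
  rw [Finset.sum_comm]
  refine Finset.sum_congr rfl fun j _ => ?_
  rw [cnt_eq_sum, Finset.mul_sum, Finset.sum_filter]
  refine Finset.sum_congr rfl fun p _ => ?_
  by_cases h : p < j <;> simp [h, mul_comm]

lemma sum_erase_eq {ι : Type*} [Fintype ι] [DecidableEq ι] (i : ι) (f g : ι → ℕ)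
    (h : ∀ j, j ≠ i → f j = g j) :
    ∑ j, f j = f i + ∑ j ∈ Finset.univ.erase i, g j := by
  rw [← Finset.add_sum_erase _ f (Finset.mem_univ i)]
  congr 1
  exact Finset.sum_congr rfl fun j hj => h j (Finset.ne_of_mem_erase hj)

lemma E2_upd_left (α β : Fin n → Fin 2) (i : Fin n) (hα : α i = 1) :
    E2 α β = E2 (Function.update α i 0) β + cnt β i := by
  rw [E2_eq, E2_eq]
  rw [sum_erase_eq i (fun j => (α j : ℕ) * cnt β j)
    (fun j => ((Function.update α i 0 j : Fin 2) : ℕ) * cnt β j)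
    (fun j hj => by simp only [Function.update_of_ne hj])]
  rw [sum_erase_eq i (fun j => ((Function.update α i 0 j : Fin 2) : ℕ) * cnt β j)
    (fun j => ((Function.update α i 0 j : Fin 2) : ℕ) * cnt β j) (fun j _ => rfl)]
  simp [hα]
  ring

lemma wt_split (γ : Fin n → Fin 2) (i : Fin n) :
    wt γ = cnt γ i + (γ i : ℕ) + ∑ j : Fin n, (γ j : ℕ) * (if i < j then 1 else 0) := by
  rw [wt_eq_sum, cnt_eq_sum]
  have : ∀ j : Fin n, (γ j : ℕ) =
      (if j < i then (γ j : ℕ) else 0) + (if j = i then (γ j : ℕ) else 0)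
        + (γ j : ℕ) * (if i < j then 1 else 0) := by
    intro j
    rcases lt_trichotomy j i with h | h | h
    · simp [h, ne_of_lt h, asymm h, not_lt_of_gt h]
    · simp [h, lt_irrefl]
    · simp [h, ne_of_gt h, not_lt_of_gt h]
  rw [Finset.sum_congr rfl (fun j _ => this j)]
  rw [Finset.sum_add_distrib, Finset.sum_add_distrib]
  congr 1
  congr 1
  · rw [Finset.sum_filter]
  · rw [Finset.sum_ite_eq' Finset.univ i (fun j => (γ j : ℕ))]
    simp

lemma cnt_upd (β : Fin n → Fin 2) (i : Fin n) (hβ : β i = 1) (j : Fin n) :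
    cnt β j = cnt (Function.update β i 0) j + (if i < j then 1 else 0) := by
  rw [cnt_eq_sum, cnt_eq_sum]
  by_cases hij : i < j
  · have hi : i ∈ Finset.univ.filter (fun p : Fin n => p < j) := by simp [hij]
    rw [← Finset.add_sum_erase _ _ hi, ← Finset.add_sum_erase _ _ hi]
    have herase : ∑ p ∈ (Finset.univ.filter (fun p : Fin n => p < j)).erase i, (β p : ℕ)
        = ∑ p ∈ (Finset.univ.filter (fun p : Fin n => p < j)).erase i,
            ((Function.update β i 0 p : Fin 2) : ℕ) := by
      refine Finset.sum_congr rfl fun p hp => ?_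
      rw [Function.update_of_ne (Finset.ne_of_mem_erase hp)]
    rw [herase, hβ]
    simp [if_pos hij]
    ring
  · rw [if_neg hij, add_zero]
    refine Finset.sum_congr rfl fun p hp => ?_
    simp only [Finset.mem_filter] at hp
    have : p ≠ i := by
      intro hpi
      exact hij (hpi ▸ hp.2)
    rw [Function.update_of_ne this]

lemma E2_upd_right (α β : Fin n → Fin 2) (i : Fin n) (hβ : β i = 1) :
    E2 α β + cnt α i + (α i : ℕ) = E2 α (Function.update β i 0) + wt α := by
  rw [E2_eq, E2_eq, wt_split α i]
  have : ∑ j : Fin n, (α j : ℕ) * cnt β j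
      = ∑ j : Fin n, (α j : ℕ) * cnt (Function.update β i 0) j
        + ∑ j : Fin n, (α j : ℕ) * (if i < j then 1 else 0) := by
    rw [← Finset.sum_add_distrib]
    refine Finset.sum_congr rfl fun j _ => ?_
    rw [cnt_upd β i hβ j]
    ring
  rw [this]
  ring

lemma cnt_un (α β : Fin n → Fin 2) (h : Dis α β) (i : Fin n) :
    cnt (un α β) i = cnt α i + cnt β i := by
  rw [cnt_eq_sum, cnt_eq_sum, cnt_eq_sum, ← Finset.sum_add_distrib]
  refine Finset.sum_congr rfl fun j _ => ?_
  rcases fin2_cases (α j) with h0 | h1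
  · rcases fin2_cases (β j) with hb | hb <;> simp [un, h0, hb]
  · have hb := h j h1
    simp [un, h1, hb]

lemma mul2_vv (α β : Fin n → Fin 2) (hD : Dis α β) :
    mul2 n (v n α) (v n β) = ((-1:K)^(E2 α β)) • v n (un α β) := by
  funext γ
  rw [mul2, Finset.sum_eq_single α]
  · by_cases hγ : γ = un α β
    · subst hγ
      have hle : ∀ i, α i = 1 → un α β i = 1 := fun i hi => by simp [un, hi]
      have hδ : (fun i => if α i = 1 then 0 else un α β i) = β := by
        funext i
        rcases fin2_cases (α i) with h0 | h1
        · simp [h0, un]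
        · simp [h1, hD i h1]
      rw [if_pos hle, hδ]
      simp only [Pi.smul_apply, smul_eq_mul, v, if_pos rfl, E2]
      simp
    · have hv : v n (un α β) γ = 0 := by simp [v, hγ]
      rw [Pi.smul_apply, hv, smul_zero]
      by_cases hle : ∀ i, α i = 1 → γ i = 1
      · rw [if_pos hle]
        have hδ : ¬ ((fun i => if α i = 1 then 0 else γ i) = β) := by
          intro hc
          apply hγ
          funext i
          rcases fin2_cases (α i) with h0 | h1
          · have := congrFun hc i
            simp [h0] at this
            simp [un, h0, ← this]
          · simp [un, h1, hle i h1]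
        have : v n β (fun i => if α i = 1 then 0 else γ i) = 0 := by simp [v, hδ]
        rw [this, mul_zero]
      · rw [if_neg hle]
  · intro α' _ hne
    split_ifs with h
    · have : v n α α' = 0 := by simp [v, hne]
      rw [this]
      ring
    · rfl
  · intro h
    exact absurd (Finset.mem_univ α) h

lemma mul2_vv0 (α β : Fin n → Fin 2) (hD : ¬ Dis α β) :
    mul2 n (v n α) (v n β) = 0 := by
  obtain ⟨p, hp⟩ := not_forall.mp hD
  rw [Classical.not_imp] at hp
  obtain ⟨hα, hβ'⟩ := hp
  have hβ : β p = 1 := fin2_ne0' hβ'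
  funext γ
  rw [mul2, Finset.sum_eq_single α]
  · split_ifs with h
    · have hδ : ¬ ((fun i => if α i = 1 then 0 else γ i) = β) := by
        intro hc
        have := congrFun hc p
        simp [hα, hβ] at this
      have : v n β (fun i => if α i = 1 then 0 else γ i) = 0 := by simp [v, hδ]
      rw [this, mul_zero]
      rfl
    · rfl
  · intro α' _ hne
    split_ifs with h
    · have : v n α α' = 0 := by simp [v, hne]
      rw [this]
      ring
    · rfl
  · intro h
    exact absurd (Finset.mem_univ α) h


lemma mul2_sum_left {ι : Type*} (S : Finset ι) (c : ι → K) (F : ι → T n) (g : T n) :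
    mul2 n (∑ i ∈ S, c i • F i) g = ∑ i ∈ S, c i • mul2 n (F i) g := by
  rw [mul2_eq_M2, map_sum, LinearMap.sum_apply]
  refine Finset.sum_congr rfl fun i _ => ?_
  rw [map_smul, LinearMap.smul_apply, mul2_eq_M2]

lemma mul2_sum_right {ι : Type*} (S : Finset ι) (c : ι → K) (f : T n) (G : ι → T n) :
    mul2 n f (∑ i ∈ S, c i • G i) = ∑ i ∈ S, c i • mul2 n f (G i) := by
  rw [mul2_eq_M2, map_sum]
  refine Finset.sum_congr rfl fun i _ => ?_
  rw [map_smul, mul2_eq_M2]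

lemma mul2_smul_left (c : K) (f g : T n) : mul2 n (c • f) g = c • mul2 n f g := by
  rw [mul2_eq_M2, map_smul, LinearMap.smul_apply, mul2_eq_M2]

lemma mul2_smul_right (c : K) (f g : T n) : mul2 n f (c • g) = c • mul2 n f g := by
  rw [mul2_eq_M2, map_smul, mul2_eq_M2]

lemma un_upd_left {α β : Fin n → Fin 2} {i : Fin n} (hα : α i = 1) (hβ : β i = 0) :
    un (Function.update α i 0) β = Function.update (un α β) i 0 := by
  funext j
  by_cases hj : j = i
  · subst hj; simp [un, hβ]
  · simp [un, Function.update_of_ne hj]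

lemma un_upd_right {α β : Fin n → Fin 2} {i : Fin n} (hα : α i = 0) (hβ : β i = 1) :
    un α (Function.update β i 0) = Function.update (un α β) i 0 := by
  funext j
  by_cases hj : j = i
  · subst hj; simp [un, hα]
  · simp [un, Function.update_of_ne hj]

lemma un_upd_overlap {α β : Fin n → Fin 2} {p : Fin n} (hα : α p = 1) (hβ : β p = 1) :
    un (Function.update α p 0) β = un α (Function.update β p 0) := by
  funext j
  by_cases hj : j = p
  · subst hj; simp [un, hα, hβ]
  · simp [un, Function.update_of_ne hj]

lemma deriv_basis (α β : Fin n → Fin 2) :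
    En n (mul2 n (v n α) (v n β))
      = mul2 n (En n (v n α)) (v n β) + mul2 n (Jm n (v n α)) (En n (v n β)) := by
  rw [Jm_v, En_v α, En_v β, mul2_sum_left, mul2_smul_left]
  by_cases hD : Dis α β
  · -- disjoint case
    rw [mul2_vv α β hD, map_smul, En_v (un α β), suppF_un α β hD,
      Finset.smul_sum, Finset.sum_union (disj_supp α β hD)]
    congr 1
    · -- sum over suppF α
      refine Finset.sum_congr rfl fun i hi => ?_
      have hαi : α i = 1 := by
        simpa [suppF] using hi
      have hβi : β i = 0 := hD i hαi
      have hDu : Dis (Function.update α i 0) β := by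
        intro j hj
        by_cases hji : j = i
        · subst hji; exact hβi
        · exact hD j (by rwa [Function.update_of_ne hji] at hj)
      rw [mul2_vv _ _ hDu, un_upd_left hαi hβi]
      simp only [smul_smul]
      congr 1
      have hE : E2 α β = E2 (Function.update α i 0) β + cnt β i := E2_upd_left α β i hαi
      have hc : cnt (un α β) i = cnt α i + cnt β i := cnt_un α β hD i
      have hsgn : ((-1:K))^(E2 α β) * (-1)^(cnt (un α β) i)
          = (-1)^(cnt α i) * (-1)^(E2 (Function.update α i 0) β) := by
        rw [← pow_add, ← pow_add]
        exact neg1pow _ _ (by omega)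
      simp only [coefE]
      linear_combination (q⁻¹ ^ (n-1-(i:ℕ))) * hsgn
    · -- sum over suppF β
      rw [mul2_sum_right, Finset.smul_sum]
      refine Finset.sum_congr rfl fun i hi => ?_
      have hβi : β i = 1 := by
        simpa [suppF] using hi
      have hαi : α i = 0 := by
        rcases fin2_cases (α i) with h0 | h1
        · exact h0
        · rw [hD i h1] at hβi; exact absurd hβi (by decide)
      have hDu : Dis α (Function.update β i 0) := by
        intro j hj
        by_cases hji : j = i
        · subst hji; rw [hαi] at hj; exact absurd hj (by decide)
        · rw [Function.update_of_ne hji]; exact hD j hj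
      rw [mul2_vv _ _ hDu, un_upd_right hαi hβi]
      simp only [smul_smul]
      congr 1
      have hE : E2 α β + cnt α i + 0 = E2 α (Function.update β i 0) + wt α := by
        have := E2_upd_right α β i hβi
        rwa [hαi] at this
      have hc : cnt (un α β) i = cnt α i + cnt β i := cnt_un α β hD i
      have hsgn : ((-1:K))^(E2 α β) * (-1)^(cnt (un α β) i)
          = (-1)^(wt α) * ((-1)^(cnt β i) * (-1)^(E2 α (Function.update β i 0))) := by
        rw [← pow_add, ← pow_add, ← pow_add]
        exact neg1pow _ _ (by omega)
      simp only [coefE]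
      linear_combination (q⁻¹ ^ (n-1-(i:ℕ))) * hsgn
  · -- overlapping case
    obtain ⟨p, hp⟩ := not_forall.mp hD
    rw [Classical.not_imp] at hp
    obtain ⟨hαp, hβp'⟩ := hp
    have hβp : β p = 1 := fin2_ne0' hβp'
    rw [mul2_vv0 α β hD, map_zero]
    have hpa : p ∈ suppF α := by simp [suppF, hαp]
    have hpb : p ∈ suppF β := by simp [suppF, hβp]
    -- all terms with i ≠ p vanish
    have hterm1 : ∀ i ∈ suppF α, i ≠ p →
        coefE α i • mul2 n (v n (Function.update α i 0)) (v n β) = 0 := by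
      intro i _ hip
      have : ¬ Dis (Function.update α i 0) β := by
        intro hc
        have := hc p (by rwa [Function.update_of_ne (Ne.symm hip)])
        rw [hβp] at this; exact absurd this (by decide)
      rw [mul2_vv0 _ _ this, smul_zero]
    have hterm2 : ∀ i ∈ suppF β, i ≠ p →
        ((-1:K)^(wt α)) • coefE β i • mul2 n (v n α) (v n (Function.update β i 0)) = 0 := by
      intro i _ hip
      have : ¬ Dis α (Function.update β i 0) := by
        intro hc
        have := hc p hαp
        rw [Function.update_of_ne (Ne.symm hip), hβp] at this
        exact absurd this (by decide)
      rw [mul2_vv0 _ _ this, smul_zero, smul_zero]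
    rw [Finset.sum_eq_single_of_mem p hpa (fun i hi hip => hterm1 i hi hip)]
    have : ∑ i ∈ suppF β, ((-1:K)^(wt α)) • coefE β i • mul2 n (v n α) (v n (Function.update β i 0))
        = ((-1:K)^(wt α)) • coefE β p • mul2 n (v n α) (v n (Function.update β p 0)) := by
      rw [← Finset.smul_sum]
      congr 1
      rw [Finset.sum_eq_single_of_mem p hpb]
      intro i hi hip
      have h0 := hterm2 i hi hip
      have hw : ((-1:K)^(wt α)) ≠ 0 := pow_ne_zero _ (by norm_num)
      exact (smul_eq_zero.mp h0).resolve_left hw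
    rw [mul2_sum_right, Finset.smul_sum, this]
    by_cases hDu : Dis (Function.update α p 0) β
    · have hDu2 : Dis α (Function.update β p 0) := by
        intro j hj
        by_cases hjp : j = p
        · subst hjp; simp
        · rw [Function.update_of_ne hjp]
          exact hDu j (by rwa [Function.update_of_ne hjp])
      rw [mul2_vv _ _ hDu, mul2_vv _ _ hDu2, un_upd_overlap hαp hβp]
      simp only [smul_smul]
      rw [← add_smul]
      suffices hz : (coefE α p * (-1:K) ^ E2 (Function.update α p 0) β +
          (-1) ^ wt α * (coefE β p * (-1) ^ E2 α (Function.update β p 0))) = 0 by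
        rw [hz, zero_smul]
      have hE1 : E2 α β = E2 (Function.update α p 0) β + cnt β p := E2_upd_left α β p hαp
      have hE2 : E2 α β + cnt α p + 1 = E2 α (Function.update β p 0) + wt α := by
        have := E2_upd_right α β p hβp
        rwa [hαp] at this
      simp only [coefE]
      have hsgn : ((-1:K))^(cnt α p) * (-1)^(E2 (Function.update α p 0) β)
          = -((-1)^(wt α) * ((-1)^(cnt β p) * (-1)^(E2 α (Function.update β p 0)))) := by
        rw [← pow_add, ← pow_add, ← pow_add]
        have : ((-1:K))^(cnt α p + E2 (Function.update α p 0) β + 1)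
            = (-1)^(wt α + (cnt β p + E2 α (Function.update β p 0))) :=
          neg1pow _ _ (by omega)
        rw [pow_succ] at this
        linear_combination -this
      linear_combination (q⁻¹ ^ (n - 1 - (p:ℕ))) * hsgn
    · have hDu2 : ¬ Dis α (Function.update β p 0) := by
        intro hc
        apply hDu
        intro j hj
        by_cases hjp : j = p
        · subst hjp; simp at hj
        · have hαj : α j = 1 := by rwa [Function.update_of_ne hjp] at hj
          have := hc j hαj
          rwa [Function.update_of_ne hjp] at this
      rw [mul2_vv0 _ _ hDu, mul2_vv0 _ _ hDu2]
      simp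

lemma v_basisFun (α : Fin n → Fin 2) : (Pi.basisFun K (Fin n → Fin 2)) α = v n α := by
  funext β
  simp [v, Pi.basisFun_apply, Pi.single_apply]

lemma deriv (f g : T n) :
    En n (mul2 n f g) = mul2 n (En n f) g + mul2 n (Jm n f) (En n g) := by
  have key : (M2 n).compr₂ (En n)
      = (M2 n).comp (En n) + ((M2 n).comp (Jm n)).compl₂ (En n) := by
    apply Module.Basis.ext (Pi.basisFun K (Fin n → Fin 2))
    intro α
    apply Module.Basis.ext (Pi.basisFun K (Fin n → Fin 2))
    intro β
    simp only [LinearMap.compr₂_apply, LinearMap.comp_apply, LinearMap.add_apply,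
      LinearMap.compl₂_apply, v_basisFun, ← mul2_eq_M2]
    exact deriv_basis α β
  have h := LinearMap.congr_fun (LinearMap.congr_fun key f) g
  simpa only [LinearMap.compr₂_apply, LinearMap.comp_apply, LinearMap.add_apply,
    LinearMap.compl₂_apply, mul2_eq_M2] using h


lemma q_ne : (q : K) ≠ 0 := RatFunc.X_ne_zero
lemma qinv_ne : (q⁻¹ : K) ≠ 0 := inv_ne_zero q_ne

lemma suppF_sing (p : Fin n) : suppF (sing p) = {p} := by
  ext j
  simp only [suppF, Finset.mem_filter, Finset.mem_univ, true_and, Finset.mem_singleton, sing]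
  constructor
  · intro h; by_contra hj; simp [hj] at h
  · intro h; simp [h]

lemma e_eq (i : ℕ) (hn : 2 ≤ n) (h1 : 1 ≤ i) (h2 : i ≤ n - 1) :
    e n i = -(v n (sing ⟨i-1, by omega⟩)) + q⁻¹ • v n (sing ⟨i, by omega⟩) := by
  have hw1 : (fun j : Fin n => if (j : ℕ) + 1 = i then (1:Fin 2) else 0) = sing ⟨i-1, by omega⟩ := by
    funext j
    simp only [sing]
    by_cases h : (j:ℕ) + 1 = i
    · rw [if_pos h, if_pos (by ext; simp; omega)]
    · rw [if_neg h, if_neg (by intro hc; apply h; rw [hc]; simp; omega)]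
  have hw2 : (fun j : Fin n => if (j : ℕ) + 1 = i + 1 then (1:Fin 2) else 0) = sing ⟨i, by omega⟩ := by
    funext j
    simp only [sing]
    by_cases h : (j:ℕ) + 1 = i + 1
    · rw [if_pos h, if_pos (by ext; simp; omega)]
    · rw [if_neg h, if_neg (by intro hc; apply h; rw [hc])]
  rw [e, w, w, hw1, hw2]

lemma upd_sing_zero (p : Fin n) : Function.update (sing p) p 0 = (fun _ => (0 : Fin 2)) := by
  funext j
  by_cases hj : j = p
  · subst hj; simp
  · rw [Function.update_of_ne hj]; simp [sing, hj]

lemma cnt_sing_self (p : Fin n) : cnt (sing p) p = 0 := by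
  rw [cnt, Finset.card_eq_zero]
  ext j
  simp only [Finset.mem_filter, Finset.mem_univ, true_and, Finset.notMem_empty, iff_false,
    not_and, sing]
  intro hj
  have hj' := (Finset.mem_filter.mp hj).2.2
  rw [if_neg (ne_of_lt (Finset.mem_filter.mp hj).2.1)] at hj'
  exact absurd hj' (by decide)

lemma En_v_sing (p : Fin n) :
    En n (v n (sing p)) = (q⁻¹ ^ (n - 1 - (p:ℕ))) • v n (fun _ => 0) := by
  rw [En_v, suppF_sing, Finset.sum_singleton, upd_sing_zero, coefE, cnt_sing_self]
  simp

lemma En_e (i : ℕ) (hn : 2 ≤ n) (h1 : 1 ≤ i) (h2 : i ≤ n - 1) : En n (e n i) = 0 := by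
  rw [e_eq i hn h1 h2, map_add, map_neg, map_smul, En_v_sing, En_v_sing]
  have h3 : n - 1 - ((⟨i-1, by omega⟩ : Fin n) : ℕ) = (n - 1 - i) + 1 := by
    simp only [Fin.val_mk]; omega
  have h4 : n - 1 - ((⟨i, by omega⟩ : Fin n) : ℕ) = n - 1 - i := by
    simp only [Fin.val_mk]
  rw [h3, h4, pow_succ]
  rw [smul_smul]
  rw [← neg_smul, ← add_smul]
  convert zero_smul K _ using 2
  ring

lemma e_support (i : ℕ) (hn : 2 ≤ n) (h1 : 1 ≤ i) (h2 : i ≤ n - 1) (γ : Fin n → Fin 2)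
    (h : e n i γ ≠ 0) : γ = sing ⟨i-1, by omega⟩ ∨ γ = sing ⟨i, by omega⟩ := by
  by_contra hc
  push_neg at hc
  apply h
  rw [e_eq i hn h1 h2]
  simp [v, hc.1, hc.2]

lemma sing_inj {p p' : Fin n} (hne : p ≠ p') : sing p ≠ sing p' := by
  intro h
  have h5 := congrFun h p
  simp only [sing] at h5
  rw [if_neg hne] at h5
  rw [if_pos trivial] at h5
  exact absurd h5 (by decide)

lemma e_top (i : ℕ) (hn : 2 ≤ n) (h1 : 1 ≤ i) (h2 : i ≤ n - 1) :
    e n i (sing ⟨i, by omega⟩) = q⁻¹ := by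
  rw [e_eq i hn h1 h2]
  have hne : sing (⟨i, by omega⟩ : Fin n) ≠ sing ⟨i-1, by omega⟩ :=
    sing_inj (by simp only [ne_eq, Fin.mk.injEq]; omega)
  simp [v, hne]

/-- the string with ones exactly on the values of `s` -/
def atop (n : ℕ) {k : ℕ} (s : Fin k → ℕ) : Fin n → Fin 2 :=
  fun j => if ∃ i, (j:ℕ) = s i then 1 else 0

lemma atop_one (s : Fin 1 → ℕ) (h : s 0 < n) : atop n s = sing ⟨s 0, h⟩ := by
  funext j
  simp only [atop, sing]
  by_cases hj : (j:ℕ) = s 0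
  · rw [if_pos ⟨0, hj⟩, if_pos (by ext; simp [hj])]
  · rw [if_neg, if_neg]
    · intro hc; apply hj; rw [hc]
    · rintro ⟨i, hi⟩
      rw [Fin.fin_one_eq_zero i] at hi
      exact hj hi

lemma suppF_atop {k : ℕ} (s : Fin k → ℕ) (hbd : ∀ i, s i < n) :
    suppF (atop n s) = Finset.univ.image (fun i => (⟨s i, hbd i⟩ : Fin n)) := by
  ext j
  simp only [suppF, Finset.mem_filter, Finset.mem_univ, true_and, Finset.mem_image, atop]
  constructor
  · intro h
    by_cases he : ∃ i, (j:ℕ) = s i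
    · obtain ⟨i, hi⟩ := he
      exact ⟨i, by ext; simp [hi]⟩
    · have h' : (if ∃ i, (j:ℕ) = s i then (1:Fin 2) else 0) = 1 := (Finset.mem_filter.mp h).2
      rw [if_neg he] at h'; exact absurd h' (by decide)
  · rintro ⟨i, hi⟩
    refine Finset.mem_filter.mpr ⟨Finset.mem_univ _, ?_⟩
    show (if ∃ i', (j:ℕ) = s i' then (1:Fin 2) else 0) = 1
    rw [if_pos ⟨i, by rw [← hi]⟩]

lemma M_atop {k : ℕ} (s : Fin k → ℕ) (hs : StrictMono s) (hbd : ∀ i, s i < n) :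
    M (atop n s) = ∑ i, s i := by
  rw [M, suppF_atop s hbd,
    Finset.sum_image (fun a _ b _ hab => hs.injective (by simpa using congrArg Fin.val hab))]

lemma wt_atop {k : ℕ} (s : Fin k → ℕ) (hs : StrictMono s) (hbd : ∀ i, s i < n) :
    wt (atop n s) = k := by
  have h0 : wt (atop n s) = (suppF (atop n s)).card := rfl
  rw [h0, suppF_atop s hbd,
    Finset.card_image_of_injective _
      (fun a b hab => hs.injective (by simpa using congrArg Fin.val hab))]
  simp

lemma mul2_apply (f g : T n) (γ : Fin n → Fin 2) :
    mul2 n f g γ = ∑ α : Fin n → Fin 2,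
      if (∀ i, α i = 1 → γ i = 1) then
        ((-1 : K) ^ (∑ p ∈ Finset.univ.filter (fun p : Fin n × Fin n => p.1 < p.2),
            (((if α p.1 = 1 then 0 else γ p.1) : Fin 2) : ℕ) * ((α p.2 : Fin 2) : ℕ)))
          * f α * g (fun i => if α i = 1 then 0 else γ i)
      else 0 := rfl

lemma decomp_of_le {α γ : Fin n → Fin 2} (hle : ∀ i, α i = 1 → γ i = 1) :
    Dis α (fun i => if α i = 1 then 0 else γ i)
    ∧ γ = un α (fun i => if α i = 1 then 0 else γ i) := by
  constructor
  · intro i hi; simp [hi]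
  · funext j
    rcases fin2_cases (α j) with h0 | h1
    · simp [un, h0]
    · simp [un, h1, hle j h1]


lemma psi_two_step (m : ℕ) (u : Fin (m+2) → T n) :
    Psi n (m+2) u = mul2 n (Psi n (m+1) (fun i => u i.castSucc)) (u (Fin.last (m+1))) := rfl

lemma psi_one (u : Fin 1 → T n) : Psi n 1 u = u 0 := rfl

lemma psi_ker (hn : 2 ≤ n) : ∀ k (s : Fin k → ℕ), (∀ i, 1 ≤ s i ∧ s i ≤ n - 1) →
    En n (Psi n k (fun i => e n (s i))) = 0 := by
  intro k
  induction k with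
  | zero =>
    intro s hb
    show En n (v0 n) = 0
    rw [v0, En_v]
    have hsupp : suppF (fun _ : Fin n => (0:Fin 2)) = ∅ := by
      ext j; simp [suppF]
    rw [hsupp, Finset.sum_empty]
  | succ m ih =>
    intro s hb
    cases m with
    | zero => exact En_e (s 0) hn (hb 0).1 (hb 0).2
    | succ m' =>
      rw [psi_two_step, deriv, ih (fun i => s i.castSucc) (fun i => hb _),
        En_e _ hn (hb _).1 (hb _).2, mul2_zero_left, mul2_zero_right, add_zero]

lemma left_of_un {b δ : Fin n → Fin 2} (hD : Dis b δ) :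
    b = fun j => if δ j = 1 then 0 else un b δ j := by
  funext j
  rcases fin2_cases (b j) with h0 | h1
  · rcases fin2_cases (δ j) with hd0 | hd1
    · simp [un, h0, hd0]
    · simp [un, h0, hd1]
  · have := hD j h1
    simp [un, h1, this]

lemma atop_snoc {m : ℕ} (s : Fin (m+2) → ℕ) (hs : StrictMono s) (hL : s (Fin.last (m+1)) < n) :
    un (atop n (fun i => s i.castSucc)) (sing ⟨s (Fin.last (m+1)), hL⟩) = atop n s := by
  funext j
  simp only [un]
  by_cases he : ∃ i : Fin (m+1), (j:ℕ) = s i.castSucc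
  · have h1 : atop n (fun i => s i.castSucc) j = 1 := by rw [atop, if_pos he]
    rw [h1, if_pos rfl]
    obtain ⟨i, hi⟩ := he
    rw [atop, if_pos ⟨i.castSucc, hi⟩]
  · have h1 : atop n (fun i => s i.castSucc) j = 0 := by rw [atop, if_neg he]
    rw [h1, if_neg (by decide)]
    by_cases hj : j = (⟨s (Fin.last (m+1)), hL⟩ : Fin n)
    · rw [hj]
      simp only [sing, if_pos rfl]
      exact (if_pos ⟨Fin.last (m+1), rfl⟩).symm
    · have h2 : (sing ⟨s (Fin.last (m+1)), hL⟩ : Fin n → Fin 2) j = 0 := by simp [sing, hj]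
      rw [h2, atop, if_neg]
      rintro ⟨i, hi⟩
      rcases Fin.eq_castSucc_or_eq_last i with ⟨i', hi'⟩ | hlast
      · exact he ⟨i', by rw [hi, hi']⟩
      · rw [hlast] at hi
        exact hj (Fin.ext hi)

/-- main structural lemma about `Psi` of increasing `e`'s -/
lemma psi_props (hn : 2 ≤ n) : ∀ k (s : Fin (k+1) → ℕ), StrictMono s →
    (∀ i, 1 ≤ s i ∧ s i ≤ n - 1) →
    (∀ γ, Psi n (k+1) (fun i => e n (s i)) γ ≠ 0 →
        wt γ = k+1 ∧ M γ ≤ ∑ i, s i ∧ (M γ = ∑ i, s i → γ = atop n s))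
    ∧ Psi n (k+1) (fun i => e n (s i)) (atop n s) ≠ 0 := by
  intro k
  induction k with
  | zero =>
    intro s _ hb
    have hb0 := hb 0
    have hsn : s 0 < n := by omega
    have hatop : atop n s = sing ⟨s 0, hsn⟩ := atop_one s hsn
    have hsum : ∑ i : Fin 1, s i = s 0 := by simp
    constructor
    · intro γ hγ
      rw [psi_one] at hγ
      rcases e_support (s 0) hn hb0.1 hb0.2 γ hγ with h | h
      · subst h
        refine ⟨wt_sing _, ?_, ?_⟩
        · rw [M_sing, hsum]; simp only [Fin.val_mk]; omega
        · intro hM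
          rw [M_sing, hsum] at hM
          simp only [Fin.val_mk] at hM
          omega
      · subst h
        refine ⟨wt_sing _, ?_, ?_⟩
        · rw [M_sing, hsum]
        · intro _
          rw [hatop]
    · rw [psi_one, hatop]
      rw [e_top (s 0) hn hb0.1 hb0.2]
      exact qinv_ne
  | succ m ih =>
    intro s hs hb
    set s' : Fin (m+1) → ℕ := fun i => s i.castSucc with hs'def
    have hs' : StrictMono s' := fun a b hab => hs (Fin.castSucc_lt_castSucc_iff.mpr hab)
    have hb' : ∀ i, 1 ≤ s' i ∧ s' i ≤ n - 1 := fun i => hb _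
    obtain ⟨IHsupp, IHtop⟩ := ih s' hs' hb'
    set F : T n := Psi n (m+1) (fun i => e n (s' i)) with hFdef
    set L : ℕ := s (Fin.last (m+1)) with hLdef
    have hL1 : 1 ≤ L := (hb _).1
    have hL2 : L ≤ n - 1 := (hb _).2
    have hLn : L < n := by omega
    set P2 : Fin n := ⟨L, hLn⟩ with hP2def
    have hW : ∑ i : Fin (m+2), s i = (∑ i : Fin (m+1), s' i) + L := by
      rw [Fin.sum_univ_castSucc]
    have hpsi : Psi n (m+2) (fun i => e n (s i)) = mul2 n F (e n L) := rfl
    have hslt : ∀ i : Fin (m+1), s' i < L := by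
      intro i
      exact hs (Fin.castSucc_lt_last i)
    -- γ = atop n s has a 1 at position P2
    have hγP2 : atop n s P2 = 1 := by
      rw [atop, if_pos ⟨Fin.last (m+1), rfl⟩]
    have hα₀P2 : atop n s' P2 = 0 := by
      rw [atop, if_neg]
      rintro ⟨i, hi⟩
      exact absurd hi.symm (ne_of_lt (hslt i))
    -- (T1) removing position P2 from atop s gives atop s'
    have hT1 : (fun j => if (sing P2 : Fin n → Fin 2) j = 1 then 0 else atop n s j)
        = atop n s' := by
      funext j
      by_cases hj : j = P2
      · subst hj
        have h1 : (sing P2 : Fin n → Fin 2) P2 = 1 := by simp [sing]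
        rw [h1, if_pos rfl, hα₀P2]
      · have hsing : (sing P2 : Fin n → Fin 2) j = 0 := by simp [sing, hj]
        rw [hsing, if_neg (by decide)]
        have hjL : (j : ℕ) ≠ L := fun hc => hj (Fin.ext hc)
        simp only [atop]
        by_cases he : ∃ i : Fin (m+1), (j:ℕ) = s' i
        · obtain ⟨i, hi⟩ := he
          rw [if_pos ⟨i.castSucc, hi⟩, if_pos ⟨i, hi⟩]
        · rw [if_neg, if_neg he]
          rintro ⟨i, hi⟩
          rcases Fin.eq_castSucc_or_eq_last i with ⟨i', hi'⟩ | hlast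
          · exact he ⟨i', by rw [hi, hi']⟩
          · rw [hlast] at hi
            exact hjL hi
    -- (T2) the complement of atop s' inside atop s is sing P2
    have hT2 : (fun j => if atop n s' j = 1 then 0 else atop n s j) = sing P2 := by
      funext j
      by_cases hj : j = P2
      · subst hj
        rw [hα₀P2, if_neg (by decide), hγP2]
        simp [sing]
      · have hjL : (j : ℕ) ≠ L := fun hc => hj (Fin.ext hc)
        have hsing : (sing P2 : Fin n → Fin 2) j = 0 := by simp [sing, hj]
        rw [hsing]
        by_cases he : ∃ i : Fin (m+1), (j:ℕ) = s' i
        · rw [atop, if_pos he, if_pos rfl]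
        · have h0 : atop n s' j = 0 := by rw [atop, if_neg he]
          rw [h0, if_neg (by decide), atop, if_neg]
          rintro ⟨i, hi⟩
          rcases Fin.eq_castSucc_or_eq_last i with ⟨i', hi'⟩ | hlast
          · exact he ⟨i', by rw [hi, hi']⟩
          · rw [hlast] at hi
            exact hjL hi
    have hMtop : M (atop n s) = (∑ i : Fin (m+1), s' i) + L := by
      rw [M_atop s hs (fun i => by have := hb i; omega), hW]
    -- support property
    have hsupport : ∀ γ, mul2 n F (e n L) γ ≠ 0 →
        wt γ = m+2 ∧ M γ ≤ ∑ i : Fin (m+2), s i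
          ∧ (M γ = ∑ i : Fin (m+2), s i → γ = atop n s) := by
      intro γ hγ
      rw [mul2_apply] at hγ
      obtain ⟨b, -, hterm⟩ := Finset.exists_ne_zero_of_sum_ne_zero hγ
      rw [ne_eq] at hterm
      split_ifs at hterm with hle
      · set δ : Fin n → Fin 2 := fun i => if b i = 1 then 0 else γ i with hδdef
        have hF : F b ≠ 0 := fun h => hterm (by rw [h]; ring)
        have hg : e n L δ ≠ 0 := fun h => hterm (by rw [h]; ring)
        obtain ⟨hDis, hγeq⟩ := decomp_of_le hle
        rw [← hδdef] at hγeq hDis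
        obtain ⟨hwtb, hMb, hMeq⟩ := IHsupp b hF
        rcases e_support L hn hL1 hL2 δ hg with hδ | hδ
        · -- δ = sing (L-1)
          have hwtγ : wt γ = m + 2 := by
            rw [hγeq, wt_un _ _ hDis, hwtb, hδ, wt_sing]
          have hMγ : M γ = M b + (L - 1) := by
            rw [hγeq, M_un _ _ hDis, hδ, M_sing]
          exact ⟨hwtγ, by omega, by intro hM; exfalso; omega⟩
        · -- δ = sing L
          have hwtγ : wt γ = m + 2 := by
            rw [hγeq, wt_un _ _ hDis, hwtb, hδ, wt_sing]
          have hMγ : M γ = M b + L := by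
            rw [hγeq, M_un _ _ hDis, hδ, M_sing]
          refine ⟨hwtγ, by omega, ?_⟩
          intro hM
          have hMb' : M b = ∑ i : Fin (m+1), s' i := by omega
          have hbtop : b = atop n s' := hMeq hMb'
          rw [hγeq, hbtop, hδ]
          rw [← atop_snoc s hs hLn]
      · exact absurd rfl hterm
    constructor
    · intro γ hγ
      rw [hpsi] at hγ
      exact hsupport γ hγ
    · rw [hpsi, mul2_apply]
      rw [Finset.sum_eq_single (atop n s')]
      · have hle : ∀ i, atop n s' i = 1 → atop n s i = 1 := by
          intro j hj
          rw [atop] at hj ⊢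
          by_cases he : ∃ i : Fin (m+1), (j:ℕ) = s' i
          · obtain ⟨i, hi⟩ := he
            rw [if_pos ⟨i.castSucc, hi⟩]
          · rw [if_neg he] at hj
            exact absurd hj (by decide)
        rw [if_pos hle, hT2, e_top L hn hL1 hL2]
        exact mul_ne_zero (mul_ne_zero (pow_ne_zero _ (by norm_num)) IHtop) qinv_ne
      · intro b _ hbne
        by_contra hterm
        split_ifs at hterm with hle
        · set δ : Fin n → Fin 2 := fun i => if b i = 1 then 0 else atop n s i with hδdef
          have hF : F b ≠ 0 := fun h => hterm (by rw [h]; ring)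
          have hg : e n L δ ≠ 0 := fun h => hterm (by rw [h]; ring)
          obtain ⟨hDis, hγeq⟩ := decomp_of_le hle
          rw [← hδdef] at hγeq hDis
          obtain ⟨hwtb, hMb, hMeq⟩ := IHsupp b hF
          rcases e_support L hn hL1 hL2 δ hg with hδ | hδ
          · -- δ = sing (L-1) : M-contradiction
            have hMγ : M (atop n s) = M b + (L - 1) := by
              rw [hγeq, M_un _ _ hDis, hδ, M_sing]
            rw [hMtop] at hMγ
            omega
          · -- δ = sing L : then b = atop n s'
            apply hbne
            have hb' := left_of_un hDis
            rw [← hγeq, hδ] at hb'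
            rw [hb', hT1]
        · exact absurd rfl hterm
      · intro h
        exact absurd (Finset.mem_univ _) h


lemma mem_Tk_of_support (k : ℕ) (f : T n) (h : ∀ γ, f γ ≠ 0 → wt γ = k) : f ∈ Tk n k := by
  rw [eq_sum_v f]
  apply Submodule.sum_mem
  intro γ _
  by_cases hγ : f γ = 0
  · rw [hγ, zero_smul]
    exact Submodule.zero_mem _
  · exact Submodule.smul_mem _ _ (Submodule.subset_span ⟨γ, h γ hγ, rfl⟩)

lemma support_of_mem_Tk {k : ℕ} {f : T n} (hf : f ∈ Tk n k) :
    ∀ γ, wt γ ≠ k → f γ = 0 := by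
  let Z : Submodule K (T n) :=
    { carrier := {f : T n | ∀ γ, wt γ ≠ k → f γ = 0}
      add_mem' := fun hf hg γ hγ => by
        simp only [Set.mem_setOf_eq] at hf hg
        simp [Pi.add_apply, hf γ hγ, hg γ hγ]
      zero_mem' := fun γ _ => rfl
      smul_mem' := fun c f hf γ hγ => by
        simp only [Set.mem_setOf_eq] at hf
        simp [Pi.smul_apply, hf γ hγ] }
  have hle : Tk n k ≤ Z := by
    rw [Tk, Submodule.span_le]
    rintro f ⟨α, hα, rfl⟩
    intro γ hγ
    have : γ ≠ α := fun hc => hγ (hc ▸ hα)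
    simp [v, this]
  exact hle hf

lemma wt_upd1 (β : Fin n → Fin 2) (i : Fin n) (h : β i = 0) :
    wt (Function.update β i 1) = wt β + 1 := by
  rw [wt_eq_sum, wt_eq_sum]
  rw [sum_erase_eq i (fun j => ((Function.update β i 1 j : Fin 2):ℕ))
    (fun j => (β j : ℕ)) (fun j hj => by simp only [Function.update_of_ne hj])]
  rw [sum_erase_eq i (fun j => (β j : ℕ)) (fun j => (β j:ℕ)) (fun _ _ => rfl)]
  simp [h]
  omega

lemma wt_upd0 (γ : Fin n → Fin 2) (i : Fin n) (h : γ i = 1) :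
    wt γ = wt (Function.update γ i 0) + 1 := by
  rw [wt_eq_sum, wt_eq_sum]
  rw [sum_erase_eq i (fun j => (γ j : ℕ)) (fun j => (γ j:ℕ)) (fun _ _ => rfl)]
  rw [sum_erase_eq i (fun j => ((Function.update γ i 0 j : Fin 2):ℕ))
    (fun j => (γ j : ℕ)) (fun j hj => by simp only [Function.update_of_ne hj])]
  simp [h]
  omega

lemma cnt_zero_pos (hn : 0 < n) (β : Fin n → Fin 2) : cnt β ⟨0, hn⟩ = 0 := by
  rw [cnt, Finset.card_eq_zero]
  ext j
  simp only [Finset.mem_filter, Finset.mem_univ, true_and, Finset.notMem_empty, iff_false,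
    not_and]
  intro hj
  exfalso
  have h2 := Fin.lt_def.mp hj
  simp only [Fin.val_mk] at h2
  omega

/-- key injectivity: an element of `Hk` vanishing on strings starting with 0 is zero -/
lemma hk_vanish (hn : 0 < n) (k : ℕ) (x : T n) (hker : En n x = 0)
    (hTk : ∀ γ, wt γ ≠ k → x γ = 0)
    (hvan : ∀ γ, wt γ = k → γ ⟨0, hn⟩ = 0 → x γ = 0) : x = 0 := by
  funext γ
  show x γ = 0
  by_cases h1 : wt γ = k
  · by_cases h2 : γ ⟨0, hn⟩ = 0
    · exact hvan γ h1 h2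
    · have h3 : γ ⟨0, hn⟩ = 1 := fin2_ne0' h2
      set β : Fin n → Fin 2 := Function.update γ ⟨0, hn⟩ 0 with hβdef
      have hβ0 : β ⟨0, hn⟩ = 0 := by simp [hβdef]
      have hwtβ : wt β + 1 = k := by
        rw [← h1, wt_upd0 γ ⟨0, hn⟩ h3]
      have hupd : Function.update β ⟨0, hn⟩ 1 = γ := by
        funext j
        by_cases hj : j = ⟨0, hn⟩
        · subst hj; simp [h3]
        · rw [Function.update_of_ne hj, hβdef, Function.update_of_ne hj]
      have hEnβ := congrFun hker β
      simp only [En, LinearMap.coe_mk, AddHom.coe_mk, Pi.zero_apply] at hEnβ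
      rw [Finset.sum_eq_single (⟨0, hn⟩ : Fin n)] at hEnβ
      · rw [if_pos hβ0, hupd] at hEnβ
        have hq : ((-1:K) ^ (Finset.univ.filter
              (fun j : Fin n => j < ⟨0, hn⟩ ∧ β j = 1)).card * q⁻¹ ^ (n - 1 - 0)) ≠ 0 := by
          apply mul_ne_zero (pow_ne_zero _ (by norm_num)) (pow_ne_zero _ qinv_ne)
        rcases mul_eq_zero.mp hEnβ with hc | hc
        · exact absurd hc hq
        · exact hc
      · intro i _ hine
        by_cases hβi : β i = 0
        · rw [if_pos hβi]
          have hwt : wt (Function.update β i 1) = k := by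
            rw [wt_upd1 β i hβi]; omega
        
          have h0 : (Function.update β i 1) ⟨0, hn⟩ = 0 := by
            rw [Function.update_of_ne (Ne.symm hine)]
            exact hβ0
          rw [hvan _ hwt h0, mul_zero]
        · rw [if_neg hβi]
      · intro h
        exact absurd (Finset.mem_univ _) h
  · exact hTk γ h1

lemma sum_bound {k : ℕ} (s : Fin k → ℕ) (hb : ∀ i, s i ≤ n - 1) :
    ∑ i, s i ≤ k * (n-1) := by
  calc ∑ i, s i ≤ ∑ _i : Fin k, (n-1) := Finset.sum_le_sum (fun i _ => hb i)
    _ = k * (n-1) := by simp [Finset.sum_const, mul_comm]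

lemma atop_inj {k : ℕ} (s t : Fin k → ℕ) (hs : StrictMono s) (ht : StrictMono t)
    (hsb : ∀ i, s i < n) (htb : ∀ i, t i < n) (h : atop n s = atop n t) : s = t := by
  apply (StrictMono.range_inj hs ht).mp
  ext x
  simp only [Set.mem_range]
  constructor
  · rintro ⟨i, hi⟩
    have hx : atop n s ⟨x, hi ▸ hsb i⟩ = 1 := by
      rw [atop, if_pos ⟨i, hi.symm⟩]
    rw [h] at hx
    rw [atop] at hx
    by_cases he : ∃ j, ((⟨x, hi ▸ hsb i⟩ : Fin n) : ℕ) = t j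
    · obtain ⟨j, hj⟩ := he
      exact ⟨j, hj.symm⟩
    · rw [if_neg he] at hx
      exact absurd hx (by decide)
  · rintro ⟨i, hi⟩
    have hx : atop n t ⟨x, hi ▸ htb i⟩ = 1 := by
      rw [atop, if_pos ⟨i, hi.symm⟩]
    rw [← h] at hx
    rw [atop] at hx
    by_cases he : ∃ j, ((⟨x, hi ▸ htb i⟩ : Fin n) : ℕ) = s j
    · obtain ⟨j, hj⟩ := he
      exact ⟨j, hj.symm⟩
    · rw [if_neg he] at hx
      exact absurd hx (by decide)


/-- recover the sorted support enumeration of a string -/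
lemma exists_enum {k : ℕ} (α : Fin n → Fin 2) (hwt : wt α = k) (hn : 0 < n)
    (h0 : α ⟨0, hn⟩ = 0) :
    ∃ s : Fin k → ℕ, StrictMono s ∧ (∀ i, 1 ≤ s i ∧ s i ≤ n - 1) ∧ α = atop n s := by
  have hcard : (suppF α).card = k := hwt
  set iso := (suppF α).orderIsoOfFin hcard with hiso
  refine ⟨fun j => ((iso j : {x // x ∈ suppF α}) : Fin n), ?_, ?_, ?_⟩
  · intro p r hpr
    have h1 : iso p < iso r := iso.lt_iff_lt.mpr hpr
    exact h1
  · intro i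
    have hmem : ((iso i : {x // x ∈ suppF α}) : Fin n) ∈ suppF α := (iso i).2
    have hval : α ((iso i : {x // x ∈ suppF α}) : Fin n) = 1 := by
      simp only [suppF, Finset.mem_filter, Finset.mem_univ, true_and] at hmem
      exact hmem
    constructor
    · show 1 ≤ (((iso i : {x // x ∈ suppF α}) : Fin n) : ℕ)
      by_contra hc
      push_neg at hc
      have hz : ((iso i : {x // x ∈ suppF α}) : Fin n) = ⟨0, hn⟩ := by
        apply Fin.ext
        simp only [Fin.val_mk]
        omega
      rw [hz, h0] at hval
      exact absurd hval (by decide)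
    · show (((iso i : {x // x ∈ suppF α}) : Fin n) : ℕ) ≤ n - 1
      have := ((iso i : {x // x ∈ suppF α}) : Fin n).isLt
      omega
  · funext j
    rcases fin2_cases (α j) with hj | hj
    · rw [hj, atop, if_neg]
      rintro ⟨i, hi⟩
      have : ((iso i : {x // x ∈ suppF α}) : Fin n) = j := Fin.ext hi.symm
      have hmem : j ∈ suppF α := this ▸ (iso i).2
      simp only [suppF, Finset.mem_filter] at hmem
      rw [hmem.2] at hj
      exact absurd hj (by decide)
    · rw [hj, atop, if_pos]
      obtain ⟨i, hi⟩ := iso.surjective ⟨j, by simp [suppF, hj]⟩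
      exact ⟨i, by rw [hi]⟩

end Aux

open Aux in
theorem stmt1 (n k : ℕ) (hn : 2 ≤ n) (hk1 : 1 ≤ k) (hk2 : k ≤ n - 1) :
    ∃ bas : Module.Basis {s : Fin k → ℕ // StrictMono s ∧ ∀ i, 1 ≤ s i ∧ s i ≤ n - 1} K (Hk n k),
      ∀ s, (bas s : T n) = Psi n k (fun i => e n (s.1 i)) := by
  classical
  obtain ⟨k', rfl⟩ : ∃ k', k = k'+1 := ⟨k-1, by omega⟩
  haveI : Fintype {s : Fin (k'+1) → ℕ // StrictMono s ∧ ∀ i, 1 ≤ s i ∧ s i ≤ n - 1} :=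
    Fintype.ofInjective
      (fun s : {s : Fin (k'+1) → ℕ // StrictMono s ∧ ∀ i, 1 ≤ s i ∧ s i ≤ n - 1} =>
        (fun i => (⟨s.1 i, by have := (s.2.2 i).2; omega⟩ : Fin n)))
      (by
        intro a b hab
        apply Subtype.ext; funext i
        exact congrArg Fin.val (congrFun hab i))
  haveI : Nonempty {s : Fin (k'+1) → ℕ // StrictMono s ∧ ∀ i, 1 ≤ s i ∧ s i ≤ n - 1} :=
    ⟨⟨fun i => (i:ℕ)+1,
      fun a b h => by simpa using (Fin.lt_def.mp h),
      fun i => ⟨by show 1 ≤ (i:ℕ)+1; omega,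
        by show (i:ℕ)+1 ≤ n-1; have := i.isLt; omega⟩⟩⟩
  set I := {s : Fin (k'+1) → ℕ // StrictMono s ∧ ∀ i, 1 ≤ s i ∧ s i ≤ n - 1} with hI
  set fam : I → T n := fun s => Psi n (k'+1) (fun i => e n (s.1 i)) with hfam
  have hsb : ∀ (s : I) (i : Fin (k'+1)), s.1 i < n := by
    intro s i; have := (s.2.2 i).2; omega
  have hprops := fun s : I => psi_props hn k' s.1 s.2.1 s.2.2
  have hmem : ∀ s : I, fam s ∈ Hk n (k'+1) := by
    intro s
    refine Submodule.mem_inf.mpr ⟨LinearMap.mem_ker.mpr (psi_ker hn _ s.1 s.2.2), ?_⟩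
    exact mem_Tk_of_support _ _ (fun γ hγ => ((hprops s).1 γ hγ).1)
  -- linear independence
  have hInd : LinearIndependent K fam := by
    rw [Fintype.linearIndependent_iff]
    intro g hg
    suffices H : ∀ (d : ℕ) (s₀ : I), (k'+1)*n - (∑ i, s₀.1 i) ≤ d → g s₀ = 0 by
      intro s₀; exact H ((k'+1)*n) s₀ (by omega)
    intro d
    induction d with
    | zero =>
      intro s₀ hd
      exfalso
      have h1 := sum_bound s₀.1 (fun i => (s₀.2.2 i).2)
      have h3 : (k'+1) * n = (k'+1)*(n-1) + (k'+1) := by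
        have hn' : n = (n-1)+1 := by omega
        rw [hn', Nat.mul_succ]
        simp
      omega
    | succ d ihd =>
      intro s₀ hd
      have hval := congrFun hg (atop n s₀.1)
      rw [Finset.sum_apply] at hval
      simp only [Pi.smul_apply, smul_eq_mul, Pi.zero_apply] at hval
      rw [Finset.sum_eq_single s₀] at hval
      · rcases mul_eq_zero.mp hval with h | h
        · exact h
        · exact absurd h (hprops s₀).2
      · intro b _ hbne
        by_cases hgb : g b = 0
        · rw [hgb, zero_mul]
        · by_cases hfb : fam b (atop n s₀.1) = 0
          · rw [hfb, mul_zero]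
          · exfalso
            obtain ⟨hwt, hM, hMeq⟩ := (hprops b).1 _ hfb
            rw [M_atop s₀.1 s₀.2.1 (hsb s₀)] at hM hMeq
            rcases lt_or_eq_of_le hM with hlt | heq
            · apply hgb
              apply ihd b
              have hbb := sum_bound b.1 (fun i => (b.2.2 i).2)
              omega
            · apply hbne
              have h5 := hMeq heq
              have h6 := atop_inj b.1 s₀.1 b.2.1 s₀.2.1 (hsb b) (hsb s₀) h5.symm
              exact Subtype.ext h6
      · intro h; exact absurd (Finset.mem_univ _) h
  set famH : I → Hk n (k'+1) := fun s => ⟨fam s, hmem s⟩ with hfamH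
  have hIndH : LinearIndependent K famH := by
    apply LinearIndependent.of_comp (Hk n (k'+1)).subtype
    have : (⇑(Hk n (k'+1)).subtype ∘ famH) = fam := rfl
    rw [this]
    exact hInd
  -- dimension bound via restriction map
  set A := {α : Fin n → Fin 2 // wt α = k'+1 ∧ α ⟨0, by omega⟩ = 0} with hA
  let resmap : Hk n (k'+1) →ₗ[K] (A → K) :=
    { toFun := fun x a => (x : T n) a.1
      map_add' := fun x y => rfl
      map_smul' := fun c x => rfl }
  have hinj : Function.Injective resmap := by
    rw [← LinearMap.ker_eq_bot]
    rw [LinearMap.ker_eq_bot']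
    intro x hx
    apply Subtype.ext
    have hker0 : En n (x : T n) = 0 :=
      LinearMap.mem_ker.mp (Submodule.mem_inf.mp x.2).1
    have hTk0 := support_of_mem_Tk (Submodule.mem_inf.mp x.2).2
    apply hk_vanish (show 0 < n by omega) (k'+1) x.1 hker0 hTk0
    intro γ hγ h0
    exact congrFun hx ⟨γ, hγ, h0⟩
  have hfr1 : Module.finrank K (Hk n (k'+1)) ≤ Fintype.card A := by
    have h1 := LinearMap.finrank_le_finrank_of_injective hinj
    rwa [Module.finrank_pi K] at h1
  -- card A ≤ card I
  have hAI : Fintype.card A ≤ Fintype.card I := by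
    apply Fintype.card_le_of_injective
      (fun a : A => (⟨Classical.choose (exists_enum a.1 a.2.1 (by omega) a.2.2),
        (Classical.choose_spec (exists_enum a.1 a.2.1 (by omega) a.2.2)).1,
        (Classical.choose_spec (exists_enum a.1 a.2.1 (by omega) a.2.2)).2.1⟩ : I))
    intro a b hab
    apply Subtype.ext
    have ha := (Classical.choose_spec (exists_enum a.1 a.2.1 (by omega) a.2.2)).2.2
    have hb := (Classical.choose_spec (exists_enum b.1 b.2.1 (by omega) b.2.2)).2.2
    have hs : Classical.choose (exists_enum a.1 a.2.1 (by omega) a.2.2)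
        = Classical.choose (exists_enum b.1 b.2.1 (by omega) b.2.2) :=
      congrArg Subtype.val hab
    rw [ha, hb, hs]
  have hcard : Fintype.card I = Module.finrank K (Hk n (k'+1)) :=
    le_antisymm hIndH.fintype_card_le_finrank (le_trans hfr1 hAI)
  refine ⟨basisOfLinearIndependentOfCardEqFinrank hIndH hcard, fun s => ?_⟩
  rw [coe_basisOfLinearIndependentOfCardEqFinrank]


end
end

section
/- Let n ≥ 2 and 1 ≤ k ≤ n−1. For every string s ∈ S_k, the vector φ(s) lies in H_k; that is, E_n(φ(s)) = 0 and φ(s) belongs to the span T_n^{(k)} of the basis vectors with exactly k entries equal to 1. -/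
open scoped BigOperators

set_option maxHeartbeats 1000000
set_option synthInstance.maxHeartbeats 400000

noncomputable section

set_option maxRecDepth 8192
open Finset in
lemma En_apply (n : ℕ) (f : T n) (β : Fin n → Fin 2) :
    En n f β = ∑ i : Fin n,
      if β i = 0 then
        ((-1 : K) ^ (Finset.univ.filter (fun j : Fin n => j < i ∧ β j = 1)).card
          * q⁻¹ ^ (n - 1 - (i : ℕ))) * f (Function.update β i 1)
      else 0 := rfl

/-- support-weight predicate -/
def suppwt (n w : ℕ) (f : T n) : Prop := ∀ γ : Fin n → Fin 2, wt γ ≠ w → f γ = 0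

lemma wt_eq_sum {n : ℕ} (γ : Fin n → Fin 2) :
    wt γ = ∑ i : Fin n, if γ i = 1 then 1 else 0 := by
  rw [wt, Finset.card_filter]

lemma wt_add (a b : ℕ) (γ : Fin (a + b) → Fin 2) :
    wt γ = wt (fun i => γ (Fin.castAdd b i)) + wt (fun i => γ (Fin.natAdd a i)) := by
  simp only [wt_eq_sum]
  rw [Fin.sum_univ_add]

lemma wt_zero_fun (n : ℕ) : wt (fun _ : Fin n => (0 : Fin 2)) = 0 := by
  simp [wt]

lemma suppwt_v0 (n : ℕ) : suppwt n 0 (v0 n) := by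
  intro γ hγ
  rw [v0, v]
  rw [if_neg]
  rintro rfl
  exact hγ (wt_zero_fun n)
lemma wt_theta_string (b : ℕ) (r : Fin b) :
    wt (fun i => if i = r then (0 : Fin 2) else 1) = b - 1 := by
  rw [wt]
  have : (Finset.univ.filter fun i : Fin b => (if i = r then (0 : Fin 2) else 1) = 1)
      = Finset.univ.erase r := by
    ext j
    by_cases h : j = r <;> simp [h]
  rw [this, Finset.card_erase_of_mem (Finset.mem_univ r)]
  simp

lemma suppwt_theta (b : ℕ) : suppwt b (b - 1) (Theta b) := by
  intro γ hγ
  rw [Theta, Finset.sum_apply]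
  refine Finset.sum_eq_zero fun r _ => ?_
  rw [Pi.smul_apply, v]
  rw [if_neg, smul_zero]
  rintro rfl
  exact hγ (wt_theta_string b r)

lemma suppwt_conc {a b w1 w2 : ℕ} {f : T a} {g : T b}
    (hf : suppwt a w1 f) (hg : suppwt b w2 g) :
    suppwt (a + b) (w1 + w2) (conc f g) := by
  intro γ hγ
  rw [wt_add] at hγ
  rw [conc]
  by_cases h1 : wt (fun i => γ (Fin.castAdd b i)) = w1
  · rw [hg _ (fun h2 => hγ (by rw [h1, h2])), mul_zero]
  · rw [hf _ h1, zero_mul]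

lemma conc_zero_left {a b : ℕ} (g : T b) : conc (0 : T a) g = 0 := by
  funext γ; simp [conc]

lemma conc_zero_right {a b : ℕ} (f : T a) : conc f (0 : T b) = 0 := by
  funext γ; simp [conc]

lemma En_v0 (n : ℕ) : En n (v0 n) = 0 := by
  funext β
  rw [En_apply]
  refine Finset.sum_eq_zero fun i _ => ?_
  have h : Function.update β i 1 ≠ fun _ => (0 : Fin 2) := by
    intro h
    have := congrFun h i
    simp at this
  rw [v0, v, if_neg h, mul_zero, ite_self]
lemma En_v (n : ℕ) (α : Fin n → Fin 2) :
    En n (v n α) = ∑ i : Fin n,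
      if α i = 1 then
        (((-1 : K) ^ (Finset.univ.filter (fun j : Fin n => j < i ∧ α j = 1)).card
          * q⁻¹ ^ (n - 1 - (i : ℕ))) • v n (Function.update α i 0))
      else 0 := by
  funext β
  rw [En_apply, Finset.sum_apply]
  refine Finset.sum_congr rfl fun i _ => ?_
  by_cases hb : β i = 0
  · by_cases ha : α i = 1
    · by_cases he : β = Function.update α i 0
      · have hup : Function.update β i 1 = α := by
          subst he
          rw [Function.update_idem, ← ha, Function.update_eq_self]
        have hcard : (Finset.univ.filter (fun j : Fin n => j < i ∧ β j = 1)).card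
            = (Finset.univ.filter (fun j : Fin n => j < i ∧ α j = 1)).card := by
          congr 1
          apply Finset.filter_congr
          intro j _
          by_cases hj : j < i
          · have hji : j ≠ i := ne_of_lt hj
            subst he
            simp [hj, Function.update_apply, hji]
          · simp [hj]
        simp only [if_pos hb, if_pos ha, Pi.smul_apply, v, if_pos hup, if_pos he, hcard]
        simp
      · have hup : Function.update β i 1 ≠ α := by
          intro h
          apply he
          funext j
          by_cases hj : j = i
          · subst hj; rw [Function.update_self, hb]
          · rw [Function.update_apply, if_neg hj, ← h, Function.update_apply, if_neg hj]
        simp only [if_pos hb, if_pos ha, Pi.smul_apply, v, if_neg hup, if_neg he,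
          mul_zero, smul_zero]
    · have hup : Function.update β i 1 ≠ α := by
        intro h
        apply ha
        rw [← h, Function.update_self]
      simp only [if_pos hb, if_neg ha, v, if_neg hup, mul_zero, Pi.zero_apply]
  · simp only [if_neg hb]
    by_cases ha : α i = 1
    · have hne : β ≠ Function.update α i 0 := by
        intro h
        apply hb
        rw [h, Function.update_self]
      simp only [if_pos ha, Pi.smul_apply, v, if_neg hne, smul_zero]
    · simp only [if_neg ha, Pi.zero_apply]
lemma card_filter_theta (b : ℕ) (r i : Fin b) :
    (Finset.univ.filter (fun j : Fin b => j < i ∧ (if j = r then (0 : Fin 2) else 1) = 1)).card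
      = if r < i then (i : ℕ) - 1 else (i : ℕ) := by
  have hcond : ∀ j : Fin b, (j < i ∧ (if j = r then (0 : Fin 2) else 1) = 1) ↔ (j < i ∧ j ≠ r) := by
    intro j
    by_cases h : j = r <;> simp [h]
  rw [Finset.filter_congr (fun j _ => hcond j)]
  by_cases hr : r < i
  · rw [if_pos hr]
    have : (Finset.univ.filter (fun j : Fin b => j < i ∧ j ≠ r)) = (Finset.Iio i).erase r := by
      ext j
      simp [Finset.mem_erase, and_comm]
    rw [this, Finset.card_erase_of_mem (by simpa using hr), Fin.card_Iio]
  · rw [if_neg hr]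
    have : (Finset.univ.filter (fun j : Fin b => j < i ∧ j ≠ r)) = Finset.Iio i := by
      ext j
      simp only [Finset.mem_filter, Finset.mem_univ, true_and, Finset.mem_Iio]
      refine ⟨fun h => h.1, fun h => ⟨h, ?_⟩⟩
      rintro rfl
      exact hr h
    rw [this, Fin.card_Iio]

lemma theta_update (b : ℕ) (r i : Fin b) :
    Function.update (fun j => if j = r then (0 : Fin 2) else 1) i 0
      = fun j => if j = r ∨ j = i then (0 : Fin 2) else 1 := by
  funext j
  rw [Function.update_apply]
  by_cases h1 : j = i <;> by_cases h2 : j = r <;> simp [h1, h2]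

lemma En_theta (b : ℕ) : En b (Theta b) = 0 := by
  rw [Theta, map_sum]
  simp only [map_smul, En_v, Finset.smul_sum, theta_update]
  rw [← Finset.sum_product']
  refine Finset.sum_ninvolution Prod.swap ?_ ?_ (fun p => Finset.mem_univ _) (fun p => by simp) ..
  · intro p
    obtain ⟨r, i⟩ := p
    simp only [Prod.swap]
    by_cases h : i = r
    · subst h
      simp
    · have h' : ¬ (r = i) := fun hh => h hh.symm
      have hcond : (if i = r then (0:Fin 2) else 1) = 1 := by simp [h]
      have hcond' : (if r = i then (0:Fin 2) else 1) = 1 := by simp [h']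
      rw [if_pos hcond, if_pos hcond', card_filter_theta, card_filter_theta]
      have hv : (fun j => if j = i ∨ j = r then (0:Fin 2) else 1)
          = (fun j => if j = r ∨ j = i then (0:Fin 2) else 1) := by
        funext j; by_cases h1 : j = r <;> by_cases h2 : j = i <;> simp [h1, h2]
      rw [hv, smul_smul, smul_smul, ← add_smul]
      convert zero_smul K _ using 2
      rcases lt_or_gt_of_ne (fun hh : r = i => h hh.symm) with hlt | hgt
      · rw [if_pos hlt, if_neg (not_lt.mpr (le_of_lt hlt))]
        obtain ⟨i', hi'⟩ : ∃ i', (i : ℕ) = i' + 1 :=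
          ⟨(i : ℕ) - 1, by omega⟩
        rw [hi']
        simp only [Nat.add_sub_cancel]
        ring_nf
      · rw [if_neg (not_lt.mpr (le_of_lt hgt)), if_pos hgt]
        obtain ⟨r', hr'⟩ : ∃ r', (r : ℕ) = r' + 1 :=
          ⟨(r : ℕ) - 1, by omega⟩
        rw [hr']
        simp only [Nat.add_sub_cancel]
        ring_nf
  · intro p hp
    by_cases h : p.2 = p.1
    · exfalso
      apply hp
      obtain ⟨r, i⟩ := p
      simp only at h
      subst h
      simp
    · obtain ⟨r, i⟩ := p
      simp only at h ⊢
      intro hh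
      rw [Prod.ext_iff] at hh
      exact h hh.1
lemma upd_castAdd_comp_cast {a b : ℕ} (β : Fin (a + b) → Fin 2) (i : Fin a) (x : Fin 2) :
    (fun j => Function.update β (Fin.castAdd b i) x (Fin.castAdd b j))
      = Function.update (fun j => β (Fin.castAdd b j)) i x := by
  funext j
  rw [Function.update_apply, Function.update_apply]
  by_cases h : j = i
  · simp [h]
  · have h2 : Fin.castAdd b j ≠ Fin.castAdd b i := by
      simp only [ne_eq, Fin.ext_iff, Fin.coe_castAdd]
      exact fun hh => h (Fin.ext hh)
    rw [if_neg h, if_neg h2]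

lemma upd_castAdd_comp_nat {a b : ℕ} (β : Fin (a + b) → Fin 2) (i : Fin a) (x : Fin 2) :
    (fun j => Function.update β (Fin.castAdd b i) x (Fin.natAdd a j))
      = fun j => β (Fin.natAdd a j) := by
  funext j
  rw [Function.update_apply, if_neg]
  simp only [ne_eq, Fin.ext_iff, Fin.coe_natAdd, Fin.coe_castAdd]
  have := i.2; have := j.2
  omega

lemma upd_natAdd_comp_cast {a b : ℕ} (β : Fin (a + b) → Fin 2) (i : Fin b) (x : Fin 2) :
    (fun j => Function.update β (Fin.natAdd a i) x (Fin.castAdd b j))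
      = fun j => β (Fin.castAdd b j) := by
  funext j
  rw [Function.update_apply, if_neg]
  simp only [ne_eq, Fin.ext_iff, Fin.coe_natAdd, Fin.coe_castAdd]
  have := i.2; have := j.2
  omega

lemma upd_natAdd_comp_nat {a b : ℕ} (β : Fin (a + b) → Fin 2) (i : Fin b) (x : Fin 2) :
    (fun j => Function.update β (Fin.natAdd a i) x (Fin.natAdd a j))
      = Function.update (fun j => β (Fin.natAdd a j)) i x := by
  funext j
  rw [Function.update_apply, Function.update_apply]
  by_cases h : j = i
  · simp [h]
  · have h2 : Fin.natAdd a j ≠ Fin.natAdd a i := by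
      simp only [ne_eq, Fin.ext_iff, Fin.coe_natAdd]
      exact fun hh => h (Fin.ext (by omega))
    rw [if_neg h, if_neg h2]

lemma card_lt_castAdd {a b : ℕ} (β : Fin (a + b) → Fin 2) (i : Fin a) :
    (Finset.univ.filter (fun j : Fin (a + b) => j < Fin.castAdd b i ∧ β j = 1)).card
      = (Finset.univ.filter (fun j : Fin a => j < i ∧ β (Fin.castAdd b j) = 1)).card := by
  rw [Finset.card_filter, Finset.card_filter, Fin.sum_univ_add]
  have h1 : ∀ j : Fin b, ¬ (Fin.natAdd a j < Fin.castAdd b i) := by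
    intro j h
    rw [Fin.lt_def] at h
    simp only [Fin.coe_natAdd, Fin.coe_castAdd] at h
    have := i.2
    omega
  have h2 : ∀ j : Fin a, (Fin.castAdd b j < Fin.castAdd b i) ↔ j < i := fun j => Iff.rfl
  have e2 : ∀ j : Fin b, (if (Fin.natAdd a j < Fin.castAdd b i ∧ β (Fin.natAdd a j) = 1) then 1 else 0) = (0:ℕ) :=
    fun j => if_neg (fun hc => h1 j hc.1)
  rw [Finset.sum_congr rfl (fun j _ => e2 j), Finset.sum_const_zero, add_zero]
  exact Finset.sum_congr rfl fun j _ => if_congr (and_congr_left' (h2 j)) rfl rfl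

lemma card_lt_natAdd {a b : ℕ} (β : Fin (a + b) → Fin 2) (i : Fin b) :
    (Finset.univ.filter (fun j : Fin (a + b) => j < Fin.natAdd a i ∧ β j = 1)).card
      = wt (fun j => β (Fin.castAdd b j))
        + (Finset.univ.filter (fun j : Fin b => j < i ∧ β (Fin.natAdd a j) = 1)).card := by
  rw [Finset.card_filter, Finset.card_filter, Fin.sum_univ_add, wt_eq_sum]
  have h1 : ∀ j : Fin a, (Fin.castAdd b j < Fin.natAdd a i) := by
    intro j
    rw [Fin.lt_def]
    simp only [Fin.coe_natAdd, Fin.coe_castAdd]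
    have := j.2
    omega
  have h2 : ∀ j : Fin b, (Fin.natAdd a j < Fin.natAdd a i) ↔ j < i := by
    intro j
    rw [Fin.lt_def, Fin.lt_def]
    simp only [Fin.coe_natAdd]
    omega
  congr 1
  · exact Finset.sum_congr rfl fun j _ => if_congr (and_iff_right (h1 j)) rfl rfl
  · exact Finset.sum_congr rfl fun j _ => if_congr (and_congr_left' (h2 j)) rfl rfl

lemma En_conc {a b : ℕ} (w : ℕ) (f : T a) (g : T b) (hf : suppwt a w f) :
    En (a + b) (conc f g)
      = (q⁻¹ ^ b) • conc (En a f) g + ((-1 : K) ^ w) • conc f (En b g) := by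
  funext β
  rw [Pi.add_apply, Pi.smul_apply, Pi.smul_apply, smul_eq_mul, smul_eq_mul]
  rw [En_apply, Fin.sum_univ_add]
  congr 1
  · -- left part
    rw [conc, En_apply, Finset.sum_mul, Finset.mul_sum]
    refine Finset.sum_congr rfl fun i _ => ?_
    by_cases hb : β (Fin.castAdd b i) = 0
    · rw [if_pos hb, if_pos hb, conc]
      rw [upd_castAdd_comp_cast, upd_castAdd_comp_nat, card_lt_castAdd]
      have hexp : a + b - 1 - ((Fin.castAdd b i : Fin (a+b)) : ℕ) = (a - 1 - (i : ℕ)) + b := by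
        have := i.2
        simp only [Fin.coe_castAdd]
        omega
      rw [hexp, pow_add]
      ring
    · rw [if_neg hb, if_neg hb, zero_mul, mul_zero]
  · -- right part
    rw [conc, En_apply, Finset.mul_sum, Finset.mul_sum]
    refine Finset.sum_congr rfl fun i _ => ?_
    by_cases hb : β (Fin.natAdd a i) = 0
    · rw [if_pos hb, if_pos hb, conc]
      rw [upd_natAdd_comp_cast, upd_natAdd_comp_nat, card_lt_natAdd]
      have hexp : a + b - 1 - ((Fin.natAdd a i : Fin (a+b)) : ℕ) = b - 1 - (i : ℕ) := by
        have := i.2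
        simp only [Fin.coe_natAdd]
        omega
      rw [hexp, pow_add]
      by_cases hw : wt (fun j => β (Fin.castAdd b j)) = w
      · rw [hw]
        ring
      · rw [hf _ hw]
        ring
    · rw [if_neg hb, if_neg hb, mul_zero, mul_zero]
lemma lenOf_eq : ∀ (l : ℕ) (a : Fin (l + 1) → ℕ) (b : Fin l → ℕ),
    lenOf l a b = (∑ i, a i) + ∑ i, b i
  | 0, a, b => by simp [lenOf]
  | (l + 1), a, b => by
    rw [lenOf, lenOf_eq l, Fin.sum_univ_succ a, Fin.sum_univ_succ b]
    ring

lemma rawphi_ok : ∀ (l : ℕ) (a : Fin (l + 1) → ℕ) (b : Fin l → ℕ),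
    En (lenOf l a b) (rawphi l a b) = 0
      ∧ suppwt (lenOf l a b) (∑ i, (b i - 1)) (rawphi l a b)
  | 0, a, b => by
    constructor
    · exact En_v0 (a 0)
    · simpa [lenOf, rawphi] using suppwt_v0 (a 0)
  | (l + 1), a, b => by
    obtain ⟨ih1, ih2⟩ := rawphi_ok l (fun i => a i.succ) (fun i => b i.succ)
    have hX : En (a 0 + b 0) (conc (v0 (a 0)) (Theta (b 0))) = 0 := by
      rw [En_conc 0 _ _ (suppwt_v0 (a 0)), En_v0, En_theta,
        conc_zero_left, conc_zero_right, smul_zero, smul_zero, add_zero]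
    have hXw : suppwt (a 0 + b 0) (b 0 - 1) (conc (v0 (a 0)) (Theta (b 0))) := by
      have := suppwt_conc (suppwt_v0 (a 0)) (suppwt_theta (b 0))
      simpa using this
    constructor
    · show En ((a 0 + b 0) + lenOf l _ _) (conc (conc (v0 (a 0)) (Theta (b 0))) _) = 0
      rw [En_conc (b 0 - 1) _ _ hXw, hX, ih1,
        conc_zero_left, conc_zero_right, smul_zero, smul_zero, add_zero]
    · have := suppwt_conc hXw ih2
      rw [Fin.sum_univ_succ (fun i => b i - 1)]
      exact this
lemma mem_Tk_of_suppwt {n k : ℕ} {f : T n} (hf : suppwt n k f) : f ∈ Tk n k := by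
  have hrep : f = ∑ α ∈ Finset.univ.filter (fun α => wt α = k), f α • v n α := by
    funext γ
    rw [Finset.sum_apply]
    by_cases h : wt γ = k
    · rw [Finset.sum_eq_single γ]
      · simp [v]
      · intro α _ hne
        have : γ ≠ α := fun hh => hne hh.symm
        simp [v, this]
      · intro hγ
        exact absurd (Finset.mem_filter.mpr ⟨Finset.mem_univ γ, h⟩) hγ
    · rw [hf γ h]
      symm
      refine Finset.sum_eq_zero fun α hα => ?_
      have hne : γ ≠ α := by
        rintro rfl
        exact h (Finset.mem_filter.mp hα).2
      simp [v, hne]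
  rw [hrep]
  exact Submodule.sum_mem _ fun α hα => Submodule.smul_mem _ _
    (Submodule.subset_span ⟨α, (Finset.mem_filter.mp hα).2, rfl⟩)

lemma castT_rfl {a : ℕ} (f : T a) : castT rfl f = f := by
  funext γ
  rw [castT]
  congr


theorem stmt5 (n k : ℕ) (hn : 2 ≤ n) (hk1 : 1 ≤ k) (hk2 : k ≤ n - 1)
    (s : GString) (hs : memSk n k s) :
    En n (phi n s) = 0 ∧ phi n s ∈ Tk n k := by
  obtain ⟨hb2, hsum, hlen⟩ := hs
  have hl : lenOf s.l s.a s.b = n := by rw [lenOf_eq]; exact hlen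
  subst hl
  have hphi : phi (lenOf s.l s.a s.b) s = rawphi s.l s.a s.b := by
    rw [phi, dif_pos rfl, castT_rfl]
  obtain ⟨h1, h2⟩ := rawphi_ok s.l s.a s.b
  rw [hphi]
  refine ⟨h1, mem_Tk_of_suppwt ?_⟩
  rw [← hsum]
  exact h2

end
end

section
/- Let n ≥ 2. For all t and j with 1 ≤ t ≤ n−1 and 1 ≤ j ≤ n−1, the following hold in T_n: Φ_t(e_j) = q·e_j + e_{j+1} if j = t−1; Φ_t(e_j) = −q⁻¹·e_j if j = t; Φ_t(e_j) = e_{j−1} + q·e_j if j = t+1; and Φ_t(e_j) = q·e_j if |j − t| ≥ 2. -/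
open scoped BigOperators

set_option maxHeartbeats 1000000
set_option synthInstance.maxHeartbeats 400000

noncomputable section

lemma phiaux_v (n : ℕ) (i j : Fin n) (hij : i ≠ j) (α : Fin n → Fin 2) :
    PhiAux n i j (v n α) =
      ∑ p : Fin 2 × Fin 2, Rmat p (α i, α j) •
        v n (Function.update (Function.update α i p.1) j p.2) := by
  funext β
  have hji : j ≠ i := hij.symm
  have RHS : (∑ p : Fin 2 × Fin 2, Rmat p (α i, α j) •
        v n (Function.update (Function.update α i p.1) j p.2)) β
      = ∑ p : Fin 2 × Fin 2, Rmat p (α i, α j) *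
        (if β = Function.update (Function.update α i p.1) j p.2 then 1 else 0) := by
    simp [v, Finset.sum_apply]
  rw [RHS]
  show (∑ p : Fin 2 × Fin 2, Rmat (β i, β j) p *
      v n α (Function.update (Function.update β i p.1) j p.2)) = _
  rw [Finset.sum_eq_single ((α i, α j) : Fin 2 × Fin 2), Finset.sum_eq_single ((β i, β j) : Fin 2 × Fin 2)]
  · simp only [v]
    have key : (Function.update (Function.update β i (α i)) j (α j) = α) ↔
        (β = Function.update (Function.update α i (β i)) j (β j)) := by
      constructor
      · intro h; funext k
        by_cases hk1 : k = j
        · subst hk1; simp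
        by_cases hk2 : k = i
        · subst hk2; simp [Function.update_of_ne hij]
        · have hk := congrFun h k
          simp only [Function.update_of_ne hk1, Function.update_of_ne hk2] at hk ⊢
          exact hk
      · intro h; funext k
        by_cases hk1 : k = j
        · subst hk1; simp
        by_cases hk2 : k = i
        · subst hk2; simp [Function.update_of_ne hij]
        · have hk := congrFun h k
          simp only [Function.update_of_ne hk1, Function.update_of_ne hk2] at hk ⊢
          exact hk
    by_cases hc : Function.update (Function.update β i (α i)) j (α j) = α
    · rw [if_pos hc, if_pos (key.mp hc)]
    · rw [if_neg hc, if_neg (fun h => hc (key.mpr h))]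
  · intro p _ hp
    rw [if_neg, mul_zero]
    intro h
    apply hp
    have h1 := congrFun h i
    have h2 := congrFun h j
    simp [Function.update_of_ne hij, Function.update_self] at h1 h2
    exact Prod.ext h1.symm h2.symm
  · simp
  · intro p _ hp
    rw [v, if_neg, mul_zero]
    intro h
    apply hp
    have h1 := congrFun h i
    have h2 := congrFun h j
    simp [Function.update_of_ne hij, Function.update_self] at h1 h2
    exact Prod.ext h1 h2
  · simp [v]

lemma update_restore {n : ℕ} (i j : Fin n) (hij : i ≠ j) (α : Fin n → Fin 2)
    (x y : Fin 2) (hi : α i = x) (hj : α j = y) :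
    Function.update (Function.update α i x) j y = α := by
  have h1 : (Function.update α i x) j = y := by
    rw [Function.update_of_ne hij.symm, hj]
  conv_lhs => rw [← h1, Function.update_eq_self, ← hi, Function.update_eq_self]

lemma phiaux_00 (n : ℕ) (i j : Fin n) (hij : i ≠ j) (α : Fin n → Fin 2)
    (hi : α i = 0) (hj : α j = 0) :
    PhiAux n i j (v n α) = q • v n α := by
  rw [phiaux_v n i j hij, hi, hj, Fintype.sum_prod_type, Fin.sum_univ_two,
    Fin.sum_univ_two, Fin.sum_univ_two]
  simp only [Rmat, Prod.mk.injEq]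
  norm_num
  rw [update_restore i j hij α 0 0 hi hj]

lemma phiaux_10 (n : ℕ) (i j : Fin n) (hij : i ≠ j) (α : Fin n → Fin 2)
    (hi : α i = 1) (hj : α j = 0) :
    PhiAux n i j (v n α) = v n (Function.update (Function.update α i 0) j 1) := by
  rw [phiaux_v n i j hij, hi, hj, Fintype.sum_prod_type, Fin.sum_univ_two,
    Fin.sum_univ_two, Fin.sum_univ_two]
  simp only [Rmat, Prod.mk.injEq]
  norm_num

lemma phiaux_01 (n : ℕ) (i j : Fin n) (hij : i ≠ j) (α : Fin n → Fin 2)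
    (hi : α i = 0) (hj : α j = 1) :
    PhiAux n i j (v n α) =
      v n (Function.update (Function.update α i 1) j 0) + (q - q⁻¹) • v n α := by
  rw [phiaux_v n i j hij, hi, hj, Fintype.sum_prod_type, Fin.sum_univ_two,
    Fin.sum_univ_two, Fin.sum_univ_two]
  simp only [Rmat, Prod.mk.injEq]
  norm_num
  rw [update_restore i j hij α 0 1 hi hj, add_comm]

lemma Phi_eq (n t : ℕ) (ht1 : 1 ≤ t) (ht2 : t < n) :
    Phi n t = PhiAux n ⟨t - 1, by omega⟩ ⟨t, ht2⟩ := by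
  unfold Phi; rw [dif_pos ⟨ht1, ht2⟩]

lemma mk_ne_mk (n t : ℕ) (ht1 : 1 ≤ t) (ht2 : t < n) :
    (⟨t - 1, by omega⟩ : Fin n) ≠ ⟨t, ht2⟩ := by
  simp only [ne_eq, Fin.mk.injEq]; omega

lemma phi_w_far (n t m : ℕ) (ht1 : 1 ≤ t) (ht2 : t < n) (hm1 : m ≠ t) (hm2 : m ≠ t + 1) :
    Phi n t (w n m) = q • w n m := by
  rw [Phi_eq n t ht1 ht2, w]
  exact phiaux_00 n _ _ (mk_ne_mk n t ht1 ht2) _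
    (by show (if t - 1 + 1 = m then (1:Fin 2) else 0) = 0; rw [if_neg]; omega)
    (by show (if t + 1 = m then (1:Fin 2) else 0) = 0; rw [if_neg]; omega)

lemma phi_w_t (n t : ℕ) (ht1 : 1 ≤ t) (ht2 : t < n) :
    Phi n t (w n t) = w n (t + 1) := by
  have hupd : Function.update (Function.update
        (fun j : Fin n => if (j : ℕ) + 1 = t then (1 : Fin 2) else 0)
        (⟨t - 1, by omega⟩ : Fin n) 0) ⟨t, ht2⟩ 1
      = fun j : Fin n => if (j : ℕ) + 1 = t + 1 then (1 : Fin 2) else 0 := by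
    funext k
    rcases eq_or_ne k (⟨t, ht2⟩ : Fin n) with hk | hk
    · subst hk
      rw [Function.update_self, if_pos rfl]
    rcases eq_or_ne k (⟨t - 1, by omega⟩ : Fin n) with hk2 | hk2
    · subst hk2
      rw [Function.update_of_ne hk, Function.update_self, if_neg]
      show ¬(t - 1 + 1 = t + 1); omega
    · rw [Function.update_of_ne hk, Function.update_of_ne hk2]
      have h1 : (k : ℕ) ≠ t - 1 := by simpa [Fin.ext_iff] using hk2
      have h2 : (k : ℕ) ≠ t := by simpa [Fin.ext_iff] using hk
      rw [if_neg (by omega), if_neg (by omega)]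
  rw [Phi_eq n t ht1 ht2, w,
    phiaux_10 n _ _ (mk_ne_mk n t ht1 ht2) _
      (by show (if t - 1 + 1 = t then (1:Fin 2) else 0) = 1; rw [if_pos]; omega)
      (by show (if t + 1 = t then (1:Fin 2) else 0) = 0; rw [if_neg]; omega),
    hupd, w]

lemma phi_w_t1 (n t : ℕ) (ht1 : 1 ≤ t) (ht2 : t < n) :
    Phi n t (w n (t + 1)) = w n t + (q - q⁻¹) • w n (t + 1) := by
  have hupd : Function.update (Function.update
        (fun j : Fin n => if (j : ℕ) + 1 = t + 1 then (1 : Fin 2) else 0)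
        (⟨t - 1, by omega⟩ : Fin n) 1) ⟨t, ht2⟩ 0
      = fun j : Fin n => if (j : ℕ) + 1 = t then (1 : Fin 2) else 0 := by
    funext k
    rcases eq_or_ne k (⟨t, ht2⟩ : Fin n) with hk | hk
    · subst hk
      rw [Function.update_self, if_neg]
      show ¬(t + 1 = t); omega
    rcases eq_or_ne k (⟨t - 1, by omega⟩ : Fin n) with hk2 | hk2
    · subst hk2
      rw [Function.update_of_ne hk, Function.update_self, if_pos]
      show t - 1 + 1 = t; omega
    · rw [Function.update_of_ne hk, Function.update_of_ne hk2]
      have h1 : (k : ℕ) ≠ t - 1 := by simpa [Fin.ext_iff] using hk2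
      have h2 : (k : ℕ) ≠ t := by simpa [Fin.ext_iff] using hk
      rw [if_neg (by omega), if_neg (by omega)]
  rw [Phi_eq n t ht1 ht2]
  conv_lhs => rw [w]
  rw [phiaux_01 n _ _ (mk_ne_mk n t ht1 ht2) _
      (by show (if t - 1 + 1 = t + 1 then (1:Fin 2) else 0) = 0; rw [if_neg]; omega)
      (by show (if t + 1 = t + 1 then (1:Fin 2) else 0) = 1; rw [if_pos rfl]),
    hupd, ← w, ← w]


theorem stmt6 (n t j : ℕ) (hn : 2 ≤ n) (ht1 : 1 ≤ t) (ht2 : t ≤ n - 1)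
    (hj1 : 1 ≤ j) (hj2 : j ≤ n - 1) :
    (j + 1 = t → Phi n t (e n j) = q • e n j + e n (j + 1)) ∧
    (j = t → Phi n t (e n j) = -q⁻¹ • e n j) ∧
    (j = t + 1 → Phi n t (e n j) = e n (j - 1) + q • e n j) ∧
    ((j + 2 ≤ t ∨ t + 2 ≤ j) → Phi n t (e n j) = q • e n j) := by
  have hq : q ≠ 0 := RatFunc.X_ne_zero
  have htn : t < n := by omega
  refine ⟨?_, ?_, ?_, ?_⟩
  · intro h
    subst h
    simp only [e, map_add, map_neg, map_smul,
      phi_w_far n (j + 1) j (by omega) (by omega) (by omega) (by omega),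
      phi_w_t n (j + 1) (by omega) (by omega)]
    funext β
    simp only [Pi.add_apply, Pi.neg_apply, Pi.smul_apply, smul_eq_mul]
    field_simp
    ring
  · intro h
    subst h
    simp only [e, map_add, map_neg, map_smul,
      phi_w_t n j (by omega) (by omega), phi_w_t1 n j (by omega) (by omega)]
    funext β
    simp only [Pi.add_apply, Pi.neg_apply, Pi.smul_apply, smul_eq_mul]
    field_simp
    ring
  · intro h
    subst h
    simp only [e, map_add, map_neg, map_smul, Nat.add_sub_cancel,
      phi_w_t1 n t ht1 htn,
      phi_w_far n t (t + 1 + 1) ht1 htn (by omega) (by omega)]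
    funext β
    simp only [Pi.add_apply, Pi.neg_apply, Pi.smul_apply, smul_eq_mul]
    field_simp
    ring
  · intro h
    simp only [e, map_add, map_neg, map_smul,
      phi_w_far n t j ht1 htn (by omega) (by omega),
      phi_w_far n t (j + 1) ht1 htn (by omega) (by omega)]
    funext β
    simp only [Pi.add_apply, Pi.neg_apply, Pi.smul_apply, smul_eq_mul]
    field_simp

end
end

section
/- Let n ≥ 2. The n-th power of the matrix A satisfies A^n = q^{n(n−3)} · 1, where 1 is the (n−1)×(n−1) identity matrix over K = ℂ(q). -/
open scoped BigOperators

set_option maxHeartbeats 1000000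
set_option synthInstance.maxHeartbeats 400000

noncomputable section

/-- The matrix of the action of `λ` on `H_1` in the basis `(e_j)`. -/
def Amat (n : ℕ) : Matrix (Fin (n - 1)) (Fin (n - 1)) K :=
  fun j i => if (i : ℕ) = 0 then -q ^ ((n : ℤ) - 3 - ((j : ℕ) : ℤ))
    else if (j : ℕ) + 1 = (i : ℕ) then q ^ (n - 2) else 0

lemma hq0 : (q : K) ≠ 0 := RatFunc.X_ne_zero

lemma qnp (n : ℕ) (hn : 2 ≤ n) : (q : K) ^ (n - 2) = q ^ ((n : ℤ) - 2) := by
  rw [← zpow_natCast]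
  congr 1
  omega

def Apw (n k : ℕ) : Matrix (Fin (n - 1)) (Fin (n - 1)) K := fun j i =>
  if k ≤ (i : ℕ) then (if (j : ℕ) + k = (i : ℕ) then q ^ (((n:ℤ)-2)*(k:ℤ)) else 0)
  else if k = (i : ℕ) + 1 then -q ^ (((n:ℤ)-2)*((i:ℕ):ℤ) + ((n:ℤ)-3-((j:ℕ):ℤ)))
  else if (j : ℕ) + k = n + (i : ℕ) then q ^ (((n:ℤ)-2)*((k:ℤ)-2) + (n:ℤ)-4) else 0

lemma Apw_one (n : ℕ) (hn : 2 ≤ n) : Apw n 1 = Amat n := by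
  ext j i
  simp only [Apw, Amat]
  by_cases h0 : (i : ℕ) = 0
  · rw [if_neg (by omega), if_pos (by omega), if_pos h0]
    congr 2
    push_cast [h0]
    ring
  · rw [if_pos (by omega), if_neg h0]
    by_cases h1 : (j : ℕ) + 1 = (i : ℕ)
    · rw [if_pos h1, if_pos h1, qnp n hn]
      congr 1
      push_cast
      ring
    · rw [if_neg h1, if_neg h1]

lemma sum_helper (n : ℕ) (hn : 2 ≤ n) (j : Fin (n - 1)) (X : Fin (n - 1) → K) :
    ∑ m, Amat n j m * X m
      = -q ^ ((n:ℤ)-3-((j:ℕ):ℤ)) * X ⟨0, by omega⟩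
        + (if h : (j : ℕ) + 1 < n - 1 then q ^ (n - 2) * X ⟨(j : ℕ) + 1, h⟩ else 0) := by
  by_cases hjn : (j : ℕ) + 1 < n - 1
  · rw [dif_pos hjn]
    have key : ∀ m : Fin (n - 1), Amat n j m * X m
        = (if m = ⟨0, by omega⟩ then -q ^ ((n:ℤ)-3-((j:ℕ):ℤ)) * X m else 0)
          + (if m = ⟨(j : ℕ) + 1, hjn⟩ then q ^ (n - 2) * X m else 0) := by
      intro m
      simp only [Amat, Fin.ext_iff]
      split_ifs <;> first | ring1 | omega | (exfalso; omega)
    rw [Finset.sum_congr rfl (fun m _ => key m), Finset.sum_add_distrib,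
      Finset.sum_ite_eq' Finset.univ, Finset.sum_ite_eq' Finset.univ]
    simp
  · rw [dif_neg hjn]
    have key : ∀ m : Fin (n - 1), Amat n j m * X m
        = (if m = ⟨0, by omega⟩ then -q ^ ((n:ℤ)-3-((j:ℕ):ℤ)) * X m else 0) := by
      intro m
      have hm := m.isLt
      simp only [Amat, Fin.ext_iff]
      split_ifs <;> first | ring1 | omega | (exfalso; omega)
    rw [Finset.sum_congr rfl (fun m _ => key m), Finset.sum_ite_eq' Finset.univ]
    simp

end


noncomputable section
lemma step (n k : ℕ) (hn : 2 ≤ n) (hk1 : 1 ≤ k) (hk2 : k ≤ n - 1) :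
    Amat n * Apw n k = Apw n (k + 1) := by
  ext j i
  have hj : (j : ℕ) < n - 1 := j.isLt
  have hi : (i : ℕ) < n - 1 := i.isLt
  rw [Matrix.mul_apply]
  rw [sum_helper n hn j (fun m => Apw n k m i)]
  rcases Nat.lt_or_ge (i : ℕ) k with hik | hik
  · rcases Nat.eq_or_lt_of_le (Nat.succ_le_of_lt hik) with hC | hD
    · -- Case C : k = i + 1
      have h0 : ∀ hh : 0 < n - 1, Apw n k ⟨0, hh⟩ i
          = -q ^ (((n:ℤ)-2)*((i:ℕ):ℤ) + ((n:ℤ)-3)) := by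
        intro hh
        simp only [Apw, Fin.val_mk]
        rw [if_neg (by omega), if_pos (by omega)]
        norm_num
      rw [h0]
      by_cases hd : (j : ℕ) + 1 < n - 1
      · rw [dif_pos hd]
        have h1 : Apw n k ⟨(j:ℕ)+1, hd⟩ i
            = -q ^ (((n:ℤ)-2)*((i:ℕ):ℤ) + ((n:ℤ)-3-(((j:ℕ):ℤ)+1))) := by
          simp only [Apw, Fin.val_mk]
          rw [if_neg (by omega), if_pos (by omega)]
          push_cast
          ring_nf
        rw [h1]
        have h2 : Apw n (k+1) j i = 0 := by
          simp only [Apw]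
          rw [if_neg (by omega), if_neg (by omega), if_neg (by omega)]
        rw [h2, qnp n hn]
        rw [mul_neg, mul_neg, neg_mul, neg_neg, ← zpow_add₀ hq0, ← zpow_add₀ hq0]
        rw [show ((n:ℤ)-3-((j:ℕ):ℤ)) + (((n:ℤ)-2)*((i:ℕ):ℤ) + ((n:ℤ)-3))
            = ((n:ℤ)-2) + (((n:ℤ)-2)*((i:ℕ):ℤ) + ((n:ℤ)-3-(((j:ℕ):ℤ)+1))) from by ring]
        ring
      · rw [dif_neg hd]
        have h2 : Apw n (k+1) j i
            = q ^ (((n:ℤ)-2)*(((k+1:ℕ):ℤ)-2) + (n:ℤ)-4) := by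
          simp only [Apw]
          rw [if_neg (by omega), if_neg (by omega), if_pos (by omega)]
        rw [h2, mul_neg, neg_mul, neg_neg, ← zpow_add₀ hq0, add_zero]
        congr 1
        have hj2 : ((j:ℕ):ℤ) = (n:ℤ) - 2 := by omega
        have hik2 : ((i:ℕ):ℤ) = (k:ℤ) - 1 := by omega
        rw [hj2, hik2]
        push_cast
        ring
    · -- Case D : i + 1 < k
      have h0 : ∀ hh : 0 < n - 1, Apw n k ⟨0, hh⟩ i = 0 := by
        intro hh
        simp only [Apw, Fin.val_mk]
        rw [if_neg (by omega), if_neg (by omega), if_neg (by omega)]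
      rw [h0]
      by_cases hd : (j : ℕ) + 1 < n - 1
      · rw [dif_pos hd]
        by_cases hji : (j:ℕ) + 1 + k = n + (i:ℕ)
        · have h1 : Apw n k ⟨(j:ℕ)+1, hd⟩ i
              = q ^ (((n:ℤ)-2)*((k:ℤ)-2) + (n:ℤ)-4) := by
            simp only [Apw, Fin.val_mk]
            rw [if_neg (by omega), if_neg (by omega), if_pos (by omega)]
          rw [h1]
          have h2 : Apw n (k+1) j i
              = q ^ (((n:ℤ)-2)*(((k+1:ℕ):ℤ)-2) + (n:ℤ)-4) := by
            simp only [Apw]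
            rw [if_neg (by omega), if_neg (by omega), if_pos (by omega)]
          rw [h2, qnp n hn, mul_zero, zero_add, ← zpow_add₀ hq0]
          congr 1
          push_cast
          ring
        · have h1 : Apw n k ⟨(j:ℕ)+1, hd⟩ i = 0 := by
            simp only [Apw, Fin.val_mk]
            rw [if_neg (by omega), if_neg (by omega), if_neg (by omega)]
          rw [h1]
          have h2 : Apw n (k+1) j i = 0 := by
            simp only [Apw]
            rw [if_neg (by omega), if_neg (by omega), if_neg (by omega)]
          rw [h2]
          ring
      · rw [dif_neg hd]
        have h2 : Apw n (k+1) j i = 0 := by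
          simp only [Apw]
          rw [if_neg (by omega), if_neg (by omega), if_neg (by omega)]
        rw [h2]
        ring
  · rcases Nat.eq_or_lt_of_le hik with hB | hA
    · -- Case B : k = i
      have h0 : ∀ hh : 0 < n - 1, Apw n k ⟨0, hh⟩ i = q ^ (((n:ℤ)-2)*(k:ℤ)) := by
        intro hh
        simp only [Apw, Fin.val_mk]
        rw [if_pos (by omega), if_pos (by omega)]
      rw [h0]
      have h2 : Apw n (k+1) j i
          = -q ^ (((n:ℤ)-2)*((i:ℕ):ℤ) + ((n:ℤ)-3-((j:ℕ):ℤ))) := by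
        simp only [Apw]
        rw [if_neg (by omega), if_pos (by omega)]
      rw [h2]
      have hdz : (if h : (j:ℕ)+1 < n-1 then q ^ (n-2) * Apw n k ⟨(j:ℕ)+1, h⟩ i else 0) = 0 := by
        by_cases hd : (j:ℕ)+1 < n-1
        · rw [dif_pos hd]
          have h1 : Apw n k ⟨(j:ℕ)+1, hd⟩ i = 0 := by
            simp only [Apw, Fin.val_mk]
            rw [if_pos (by omega), if_neg (by omega)]
          rw [h1]
          ring
        · rw [dif_neg hd]
      rw [hdz, add_zero, neg_mul, ← zpow_add₀ hq0]
      congr 2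
      have hik2 : ((i:ℕ):ℤ) = (k:ℤ) := by omega
      rw [hik2]
      ring
    · -- Case A : k < i
      have h0 : ∀ hh : 0 < n - 1, Apw n k ⟨0, hh⟩ i = 0 := by
        intro hh
        simp only [Apw, Fin.val_mk]
        rw [if_pos (by omega), if_neg (by omega)]
      rw [h0]
      by_cases hji : (j:ℕ) + (k+1) = (i:ℕ)
      · have hd : (j:ℕ)+1 < n-1 := by omega
        rw [dif_pos hd]
        have h1 : Apw n k ⟨(j:ℕ)+1, hd⟩ i = q ^ (((n:ℤ)-2)*(k:ℤ)) := by
          simp only [Apw, Fin.val_mk]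
          rw [if_pos (by omega), if_pos (by omega)]
        rw [h1]
        have h2 : Apw n (k+1) j i = q ^ (((n:ℤ)-2)*((k+1:ℕ):ℤ)) := by
          simp only [Apw]
          rw [if_pos (by omega), if_pos (by omega)]
        rw [h2, qnp n hn, mul_zero, zero_add, ← zpow_add₀ hq0]
        congr 1
        push_cast
        ring
      · have h2 : Apw n (k+1) j i = 0 := by
          simp only [Apw]
          rw [if_pos (by omega), if_neg (by omega)]
        rw [h2]
        by_cases hd : (j:ℕ)+1 < n-1
        · rw [dif_pos hd]
          have h1 : Apw n k ⟨(j:ℕ)+1, hd⟩ i = 0 := by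
            simp only [Apw, Fin.val_mk]
            rw [if_pos (by omega), if_neg (by omega)]
          rw [h1]
          ring
        · rw [dif_neg hd]
          ring
lemma pow_eq (n : ℕ) (hn : 2 ≤ n) : ∀ m, 1 ≤ m → m ≤ n → Amat n ^ m = Apw n m := by
  intro m
  induction m with
  | zero => intro h; omega
  | succ m ih =>
    intro _ h2
    rcases Nat.eq_zero_or_pos m with rfl | hm
    · rw [pow_one, Apw_one n hn]
    · rw [pow_succ', ih hm (by omega), step n m hn hm (by omega)]


theorem stmt9 (n : ℕ) (hn : 2 ≤ n) :
    Amat n ^ n = (q ^ ((n : ℤ) * ((n : ℤ) - 3))) •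
      (1 : Matrix (Fin (n - 1)) (Fin (n - 1)) K) := by
  rw [pow_eq n hn n (by omega) le_rfl]
  ext j i
  have hi : (i : ℕ) < n - 1 := i.isLt
  simp only [Apw, Matrix.smul_apply, Matrix.one_apply, smul_eq_mul]
  rw [if_neg (by omega), if_neg (by omega)]
  by_cases hji : (j:ℕ) + n = n + (i:ℕ)
  · rw [if_pos hji, if_pos (Fin.ext (by omega)), mul_one]
    congr 1
    push_cast
    ring
  · rw [if_neg hji, if_neg (fun h => hji (by rw [h]; omega)), mul_zero]


end
end

section
/- Let n ≥ 2. The characteristic polynomial of the matrix A satisfies (X − q^{n−3}) · charpoly(A) = X^n − q^{n(n−3)} in K[X]; equivalently, charpoly(A) = Σ_{i=0}^{n−1} q^{(n−3)i} X^{n−1−i}. In particular, A has n−1 pairwise distinct eigenvalues, namely ζ·q^{n−3} for ζ ranging over the n-th roots of unity different from 1. -/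
open scoped BigOperators

set_option maxHeartbeats 1000000
set_option synthInstance.maxHeartbeats 400000

noncomputable section

def Gm (m : ℕ) (c : Fin m → Polynomial K) (t : K) : Matrix (Fin m) (Fin m) (Polynomial K) :=
  fun j i => if (i : ℕ) = 0 then c j
    else if (j : ℕ) + 1 = (i : ℕ) then -Polynomial.C t
    else if j = i then Polynomial.X else 0

lemma detGm (t : K) : ∀ (m : ℕ) (c : Fin (m + 1) → Polynomial K),
    (Gm (m + 1) c t).det
      = ∑ j : Fin (m + 1), c j * (Polynomial.C t) ^ (j : ℕ) * Polynomial.X ^ (m - (j : ℕ)) := by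
  intro m
  induction m with
  | zero =>
    intro c
    simp [Gm, Matrix.det_fin_one]
  | succ m ih =>
    intro c
    rw [Matrix.det_succ_row_zero]
    rw [Fin.sum_univ_succ, Fin.sum_univ_succ]
    have hz : ∀ j : Fin m, ((-1 : Polynomial K) ^ ((j.succ.succ : Fin (m + 2)) : ℕ)
        * Gm (m + 2) c t 0 j.succ.succ
        * ((Gm (m + 2) c t).submatrix Fin.succ (j.succ.succ).succAbove).det) = 0 := by
      intro j
      have h1 : Gm (m + 2) c t 0 j.succ.succ = 0 := by
        simp only [Gm]
        have : ((j.succ.succ : Fin (m + 2)) : ℕ) = (j : ℕ) + 2 := rfl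
        rw [this]
        have h0 : ¬ ((j : ℕ) + 2 = 0) := by omega
        have h1' : ¬ ((0 : ℕ) + 1 = (j : ℕ) + 2) := by omega
        have h2 : ¬ ((0 : Fin (m+2)) = j.succ.succ) := by
          intro h; apply h0; rw [← this, ← h]; rfl
        simp [h0, h1', h2]
      rw [h1]; ring
    rw [Finset.sum_congr rfl (fun j _ => hz j), Finset.sum_const_zero, add_zero]
    -- first submatrix is upper triangular
    have hsub0 : ((Gm (m + 2) c t).submatrix Fin.succ ((0 : Fin (m+2)).succAbove)).det
        = Polynomial.X ^ (m + 1) := by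
      have htri : ((Gm (m + 2) c t).submatrix Fin.succ ((0 : Fin (m+2)).succAbove)).BlockTriangular id := by
        intro a b hab
        simp only [Matrix.submatrix_apply, Fin.succAbove_zero, Gm]
        have h0 : ¬ (((b.succ : Fin (m+2)) : ℕ) = 0) := by simp
        have h1 : ¬ (((a.succ : Fin (m+2)) : ℕ) + 1 = ((b.succ : Fin (m+2)) : ℕ)) := by
          simp only [Fin.val_succ]
          have : (b : ℕ) < (a : ℕ) := hab
          omega
        have h2 : ¬ ((a.succ : Fin (m+2)) = b.succ) := by
          intro h; have := Fin.succ_injective _ h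
          subst this; exact lt_irrefl _ hab
        rw [if_neg h0, if_neg h1, if_neg h2]
      rw [Matrix.det_of_upperTriangular htri]
      have : ∀ i : Fin (m+1), ((Gm (m + 2) c t).submatrix Fin.succ ((0 : Fin (m+2)).succAbove)) i i = Polynomial.X := by
        intro i
        simp only [Matrix.submatrix_apply, Fin.succAbove_zero, Gm]
        have h0 : ¬ (((i.succ : Fin (m+2)) : ℕ) = 0) := by simp
        have h1 : ¬ (((i.succ : Fin (m+2)) : ℕ) + 1 = ((i.succ : Fin (m+2)) : ℕ)) := by omega
        simp [h0, h1]
      rw [Finset.prod_congr rfl (fun i _ => this i)]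
      simp
    -- second submatrix is Gm (m+1)
    have hsub1 : (Gm (m + 2) c t).submatrix Fin.succ ((Fin.succ (0 : Fin (m+1))).succAbove)
        = Gm (m + 1) (fun j => c j.succ) t := by
      ext a b
      simp only [Matrix.submatrix_apply, Gm]
      by_cases hb : (b : ℕ) = 0
      · have hb' : (Fin.succ (0 : Fin (m+1))).succAbove b = 0 := by
          have : b = 0 := by ext; exact hb
          subst this
          rfl
        rw [hb']
        simp [hb]
      · have hb' : (Fin.succ (0 : Fin (m+1))).succAbove b = b.succ := by
          rw [Fin.succAbove]
          rw [if_neg]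
          intro h
          rw [Fin.lt_iff_val_lt_val] at h
          simp only [Fin.coe_castSucc] at h
          have h1 : ((Fin.succ (0 : Fin (m+1))) : ℕ) = 1 := rfl
          omega
        rw [hb']
        have h0 : ¬ (((b.succ : Fin (m+2)) : ℕ) = 0) := by simp
        have heq : ((a.succ : ℕ) + 1 = ((b.succ : Fin (m+2)) : ℕ)) ↔ ((a : ℕ) + 1 = (b : ℕ)) := by
          simp only [Fin.val_succ]; omega
        have heq2 : (a.succ = b.succ) ↔ (a = b) := ⟨fun h => Fin.succ_injective _ h, fun h => by rw [h]⟩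
        simp only [h0, hb, if_false]
        by_cases h1 : (a : ℕ) + 1 = (b : ℕ)
        · rw [if_pos (heq.mpr h1), if_pos h1]
        · rw [if_neg (fun hh => h1 (heq.mp hh)), if_neg h1]
          by_cases h2 : a = b
          · rw [if_pos (heq2.mpr h2), if_pos h2]
          · rw [if_neg (fun hh => h2 (heq2.mp hh)), if_neg h2]
    rw [hsub0, hsub1, ih]
    have hc0 : Gm (m + 2) c t 0 0 = c 0 := by simp [Gm]
    have hc1 : Gm (m + 2) c t 0 (Fin.succ (0 : Fin (m+1))) = -Polynomial.C t := by
      have h0 : ¬ (((Fin.succ (0 : Fin (m+1)) : Fin (m+2)) : ℕ) = 0) := by simp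
      have h1 : ((0 : Fin (m+2)) : ℕ) + 1 = ((Fin.succ (0 : Fin (m+1)) : Fin (m+2)) : ℕ) := by simp
      simp [Gm, h0, h1]
    rw [hc0, hc1]
    rw [Fin.sum_univ_succ (f := fun j : Fin (m+2) => c j * (Polynomial.C t) ^ (j : ℕ) * Polynomial.X ^ ((m+1) - (j : ℕ)))]
    have hterm : ∀ j : Fin (m+1), c j.succ * (Polynomial.C t) ^ ((j.succ : Fin (m+2)) : ℕ)
        * Polynomial.X ^ (m + 1 - ((j.succ : Fin (m+2)) : ℕ))
        = Polynomial.C t * (c j.succ * (Polynomial.C t) ^ (j : ℕ) * Polynomial.X ^ (m - (j : ℕ))) := by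
      intro j
      have h1 : ((j.succ : Fin (m+2)) : ℕ) = (j : ℕ) + 1 := rfl
      have h2 : m + 1 - ((j : ℕ) + 1) = m - (j : ℕ) := by omega
      rw [h1, h2]
      ring
    rw [Finset.sum_congr rfl (fun j _ => hterm j), ← Finset.mul_sum]
    simp only [Fin.val_succ, Fin.val_zero, pow_one, pow_zero, Nat.sub_zero]
    ring

lemma q_ne_zero : q ≠ 0 := RatFunc.X_ne_zero

lemma charpoly_Amat (m : ℕ) :
    (Amat (m + 2)).charpoly
      = ∑ i ∈ Finset.range (m + 2),
          Polynomial.C (q ^ ((((m + 2 : ℕ) : ℤ) - 3) * (i : ℤ))) * Polynomial.X ^ ((m + 2) - 1 - i) := by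
  have hq := q_ne_zero
  set c : Fin (m + 1) → Polynomial K := fun j =>
    if (j : ℕ) = 0 then Polynomial.X + Polynomial.C (q ^ ((m : ℤ) - 1))
    else Polynomial.C (q ^ ((m : ℤ) - 1 - ((j : ℕ) : ℤ))) with hc
  have hchar : (Amat (m + 2)).charmatrix = Gm (m + 1) c (q ^ m) := by
    refine Matrix.ext fun j i => ?_
    by_cases hi : (i : ℕ) = 0
    · by_cases hj : (j : ℕ) = 0
      · have hji : j = i := Fin.ext (by omega)
        subst hji
        rw [Matrix.charmatrix_apply_eq]
        simp only [Gm, if_pos hi, hc, if_pos hj, Amat, if_pos hi]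
        have he : ((m + 2 : ℕ) : ℤ) - 3 - ((j : ℕ) : ℤ) = (m : ℤ) - 1 := by
          rw [hj]; push_cast; ring
        rw [he, map_neg, sub_neg_eq_add]
      · have hji : j ≠ i := fun h => hj (by rw [h]; exact hi)
        rw [Matrix.charmatrix_apply_ne _ _ _ hji]
        simp only [Gm, if_pos hi, hc, if_neg hj, Amat, if_pos hi]
        have he : ((m + 2 : ℕ) : ℤ) - 3 - ((j : ℕ) : ℤ) = (m : ℤ) - 1 - ((j : ℕ) : ℤ) := by
          push_cast; ring
        rw [he, map_neg, neg_neg]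
    · by_cases hji : j = i
      · subst hji
        rw [Matrix.charmatrix_apply_eq]
        have h1 : ¬ ((j : ℕ) + 1 = (j : ℕ)) := by omega
        simp only [Gm, Amat, if_neg hi, if_neg h1, if_pos rfl, map_zero, sub_zero, if_true]
      · rw [Matrix.charmatrix_apply_ne _ _ _ hji]
        by_cases h1 : (j : ℕ) + 1 = (i : ℕ)
        · simp only [Gm, Amat, if_neg hi, if_pos h1]
          norm_num
        · simp only [Gm, Amat, if_neg hi, if_neg h1, if_neg hji, map_zero, neg_zero]
  rw [show (Amat (m + 2)).charpoly = ((Amat (m + 2)).charmatrix).det from rfl, hchar, detGm]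
  -- common middle form
  set g : ℕ → Polynomial K := fun i =>
    (if i = 0 then Polynomial.X ^ (m + 1) else 0)
      + Polynomial.C (q ^ (((m : ℤ) - 1) * ((i : ℤ) + 1))) * Polynomial.X ^ (m - i) with hg
  have hmid : ∑ i ∈ Finset.range (m + 1), g i
      = Polynomial.X ^ (m + 1)
        + ∑ i ∈ Finset.range (m + 1),
            Polynomial.C (q ^ (((m : ℤ) - 1) * ((i : ℤ) + 1))) * Polynomial.X ^ (m - i) := by
    rw [hg, Finset.sum_add_distrib, Finset.sum_ite_eq' (Finset.range (m+1)) 0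
      (fun _ => Polynomial.X ^ (m+1))]
    rw [if_pos (Finset.mem_range.mpr (Nat.succ_pos m))]
  have hL : ∑ j : Fin (m + 1), c j * (Polynomial.C (q ^ m)) ^ (j : ℕ) * Polynomial.X ^ (m - (j : ℕ))
      = ∑ i ∈ Finset.range (m + 1), g i := by
    rw [← Fin.sum_univ_eq_sum_range (fun i => g i) (m+1)]
    refine Finset.sum_congr rfl fun j _ => ?_
    by_cases hj : (j : ℕ) = 0
    · simp only [hg, hc, if_pos hj, hj, pow_zero, Nat.sub_zero, mul_one]
      have : ((m : ℤ) - 1) * (((0 : ℕ) : ℤ) + 1) = (m : ℤ) - 1 := by push_cast; ring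
      rw [this, add_mul, ← pow_succ']
      simp
    · simp only [hg, hc, if_neg hj]
      rw [← Polynomial.C_pow, ← Polynomial.C_mul]
      have : q ^ ((m : ℤ) - 1 - ((j : ℕ) : ℤ)) * (q ^ m) ^ (j : ℕ)
          = q ^ (((m : ℤ) - 1) * (((j : ℕ) : ℤ) + 1)) := by
        rw [← pow_mul, ← zpow_natCast q (m * (j : ℕ)), ← zpow_add₀ hq]
        congr 1
        push_cast; ring
      rw [this, zero_add]
  have hR : ∑ i ∈ Finset.range (m + 2),
        Polynomial.C (q ^ ((((m + 2 : ℕ) : ℤ) - 3) * (i : ℤ))) * Polynomial.X ^ ((m + 2) - 1 - i)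
      = Polynomial.X ^ (m + 1)
        + ∑ i ∈ Finset.range (m + 1),
            Polynomial.C (q ^ (((m : ℤ) - 1) * ((i : ℤ) + 1))) * Polynomial.X ^ (m - i) := by
    rw [Finset.sum_range_succ']
    rw [add_comm]
    congr 1
    · norm_num
    · refine Finset.sum_congr rfl fun i _ => ?_
      congr 2
      · congr 1
        push_cast; ring
      · omega
  rw [hL, hmid, hR]

lemma part2 (n : ℕ) (hn : 2 ≤ n) :
    (Amat n).charpoly
      = ∑ i ∈ Finset.range n,
          Polynomial.C (q ^ (((n : ℤ) - 3) * (i : ℤ))) * Polynomial.X ^ (n - 1 - i) := by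
  obtain ⟨m, rfl⟩ : ∃ m, n = m + 2 := ⟨n - 2, by omega⟩
  exact charpoly_Amat m

lemma part1 (n : ℕ) (hn : 2 ≤ n) :
    (Polynomial.X - Polynomial.C (q ^ ((n : ℤ) - 3))) * (Amat n).charpoly
      = Polynomial.X ^ n - Polynomial.C (q ^ ((n : ℤ) * ((n : ℤ) - 3))) := by
  have hq := q_ne_zero
  set a : K := q ^ ((n : ℤ) - 3) with hadef
  have ha : ∀ i : ℕ, q ^ (((n : ℤ) - 3) * (i : ℤ)) = a ^ i := fun i => by
    rw [hadef, zpow_mul, zpow_natCast]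
  rw [part2 n hn, Finset.mul_sum]
  have hterm : ∀ i ∈ Finset.range n,
      (Polynomial.X - Polynomial.C a) * (Polynomial.C (q ^ (((n : ℤ) - 3) * (i : ℤ))) * Polynomial.X ^ (n - 1 - i))
        = (Polynomial.C (a ^ i) * Polynomial.X ^ (n - i))
          - (Polynomial.C (a ^ (i + 1)) * Polynomial.X ^ (n - (i + 1))) := by
    intro i hi
    rw [Finset.mem_range] at hi
    rw [ha i]
    have h1 : n - (i + 1) = n - 1 - i := by omega
    have h2 : (Polynomial.X : Polynomial K) * Polynomial.X ^ (n - 1 - i) = Polynomial.X ^ (n - i) := by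
      rw [← pow_succ']
      congr 1
      omega
    rw [h1, sub_mul, ← mul_assoc, mul_comm Polynomial.X (Polynomial.C (a ^ i)), mul_assoc, h2]
    congr 1
    rw [← mul_assoc, ← Polynomial.C_mul, ← pow_succ']
  rw [Finset.sum_congr rfl hterm,
    Finset.sum_range_sub' (fun i => (Polynomial.C (a ^ i) * Polynomial.X ^ (n - i) : Polynomial K))]
  simp only [pow_zero, Nat.sub_zero, Nat.sub_self, map_one, one_mul, pow_zero, mul_one]
  congr 2
  rw [hadef, ← zpow_natCast (q ^ ((n : ℤ) - 3)) n, ← zpow_mul]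
  congr 1
  ring

lemma part3 (n : ℕ) :
    Function.Injective (fun ζ : ℂ => algebraMap ℂ K ζ * q ^ ((n : ℤ) - 3)) := by
  intro x y h
  simp only at h
  have h2 := mul_right_cancel₀ (zpow_ne_zero _ q_ne_zero) h
  exact (algebraMap ℂ K).injective h2

lemma part4 (n : ℕ) (hn : 2 ≤ n) :
    ∀ ζ : ℂ, ζ ^ n = 1 → ζ ≠ 1 →
      ((Amat n).charpoly).IsRoot (algebraMap ℂ K ζ * q ^ ((n : ℤ) - 3)) := by
  intro ζ hζn hζ1
  have hq := q_ne_zero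
  set w : K := q ^ ((n : ℤ) - 3) with hw
  set x : K := algebraMap ℂ K ζ * w with hx
  have h1 := congrArg (Polynomial.eval x) (part1 n hn)
  simp only [Polynomial.eval_mul, Polynomial.eval_sub, Polynomial.eval_X, Polynomial.eval_C,
    Polynomial.eval_pow] at h1
  have hxp : x ^ n = q ^ ((n : ℤ) * ((n : ℤ) - 3)) := by
    rw [hx, mul_pow, ← map_pow, hζn, map_one, one_mul, hw,
      ← zpow_natCast (q ^ ((n : ℤ) - 3)) n, ← zpow_mul]
    congr 1
    ring
  rw [hxp, sub_self] at h1
  have hxw : x - w ≠ 0 := by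
    intro h
    apply hζ1
    have hww : w ≠ 0 := zpow_ne_zero _ hq
    have : algebraMap ℂ K ζ * w = 1 * w := by
      rw [one_mul, ← sub_eq_zero]
      exact h
    have h2 := mul_right_cancel₀ hww this
    have h3 : algebraMap ℂ K ζ = algebraMap ℂ K 1 := by rw [map_one]; exact h2
    exact (algebraMap ℂ K).injective h3
  rcases mul_eq_zero.mp h1 with h | h
  · exact absurd h hxw
  · exact h

theorem stmt10 (n : ℕ) (hn : 2 ≤ n) :
    (Polynomial.X - Polynomial.C (q ^ ((n : ℤ) - 3))) * (Amat n).charpoly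
        = Polynomial.X ^ n - Polynomial.C (q ^ ((n : ℤ) * ((n : ℤ) - 3))) ∧
    (Amat n).charpoly
        = ∑ i ∈ Finset.range n,
            Polynomial.C (q ^ (((n : ℤ) - 3) * (i : ℤ))) * Polynomial.X ^ (n - 1 - i) ∧
    Function.Injective (fun ζ : ℂ => algebraMap ℂ K ζ * q ^ ((n : ℤ) - 3)) ∧
    ∀ ζ : ℂ, ζ ^ n = 1 → ζ ≠ 1 →
      ((Amat n).charpoly).IsRoot (algebraMap ℂ K ζ * q ^ ((n : ℤ) - 3)) := by
  exact ⟨part1 n hn, part2 n hn, part3 n, part4 n hn⟩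

end
end
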